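/- arXiv:1102.5071 — 5 statements merged into one kernel-verified Lean document; each statement's English description precedes it below -/
import Mathlib

section
/- Let Ω : ℝ → M_n(ℂ) be a matrix-valued function differentiable at t with derivative Ω̇(t). Then the map s ↦ exp(Ω(s)) is differentiable at t, and its derivative equals (∫_0^1 exp(r·Ω(t)) · Ω̇(t) · exp(−r·Ω(t)) dr) · exp(Ω(t)), where the integral is the Bochner integral of the matrix-valued integrand over r ∈ [0,1]. -/
open NormedSpace Filter MeasureTheory intervalIntegral Set Asymptotics Nat

section general
variable {A : Type*} [NormedRing A] [NormedAlgebra ℝ A] [CompleteSpace A] [NormOneClass A]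

private noncomputable instance myRatAlg : NormedAlgebra ℚ A := NormedAlgebra.restrictScalars ℚ ℝ A

private lemma myNormExpLe (x : A) : ‖exp x‖ ≤ Real.exp ‖x‖ := by
  rw [exp_eq_tsum ℝ]
  refine (norm_tsum_le_tsum_norm (norm_expSeries_summable' x)).trans ?_
  have h2 : Real.exp ‖x‖ = ∑' n : ℕ, ‖x‖ ^ n / n ! := by
    rw [Real.exp_eq_exp_ℝ, exp_eq_tsum_div]
  rw [h2]
  refine Summable.tsum_le_tsum (fun n => ?_) (norm_expSeries_summable' x)
    (Real.summable_pow_div_factorial ‖x‖)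
  rw [norm_smul, norm_inv, Real.norm_natCast, div_eq_inv_mul]
  exact mul_le_mul_of_nonneg_left (norm_pow_le x n) (by positivity)

private lemma myExpAdd (X : A) (a b : ℝ) :
    exp ((a + b) • X) = exp (a • X) * exp (b • X) := by
  rw [add_smul]
  exact exp_add_of_commute (((Commute.refl X).smul_left a).smul_right b)

private lemma myContExp : Continuous (exp : A → A) := exp_continuous

private lemma myContSmul (X : A) : Continuous fun r : ℝ => exp (r • X) :=
  myContExp.comp (continuous_id.smul continuous_const)

private lemma myContSmulNeg (X : A) : Continuous fun r : ℝ => exp (-(r • X)) :=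
  myContExp.comp (continuous_id.smul continuous_const).neg

private lemma duhamel (X B : A) :
    exp (X + B) - exp X
      = exp X * ∫ r in (0:ℝ)..1, exp (-(r • X)) * B * exp (r • (X + B)) := by
  have hg : ∀ r : ℝ, HasDerivAt (fun u : ℝ => exp (-(u • X)) * exp (u • (X + B)))
      (exp (-(r • X)) * B * exp (r • (X + B))) r := by
    intro r
    have h1 : HasDerivAt (fun u : ℝ => exp (u • (-X))) (exp (r • (-X)) * (-X)) r :=
      hasDerivAt_exp_smul_const (-X) r
    have h2 : HasDerivAt (fun u : ℝ => exp (u • (X + B))) ((X + B) * exp (r • (X + B))) r :=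
      hasDerivAt_exp_smul_const' (X + B) r
    simp only [smul_neg] at h1
    convert h1.mul h2 using 1
    · rfl
    · noncomm_ring
  have hcont : Continuous fun r : ℝ => exp (-(r • X)) * B * exp (r • (X + B)) :=
    ((myContSmulNeg X).mul continuous_const).mul (myContSmul (X + B))
  have hint := intervalIntegral.integral_eq_sub_of_hasDerivAt (a := (0:ℝ)) (b := 1)
    (fun r _ => hg r) (hcont.intervalIntegrable 0 1)
  rw [hint]
  have hXneg : exp X * exp (-X) = 1 := by
    rw [← exp_add_of_commute (Commute.neg_right (Commute.refl X)), add_neg_cancel, exp_zero]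
  simp only [zero_smul, neg_zero, one_smul, exp_zero, one_mul, mul_one]
  rw [mul_sub, mul_one, ← mul_assoc, hXneg, one_mul]

private lemma duhamel_bound (M : ℝ) (X B : A) (hX : ‖X‖ ≤ M) (hB : ‖B‖ ≤ 1) :
    ‖exp (X + B) - exp X‖ ≤ ‖B‖ * (Real.exp M * (Real.exp M * Real.exp (M + 1))) := by
  rw [duhamel]
  refine (norm_mul_le _ _).trans ?_
  have hbd : ∀ r ∈ Set.uIoc (0:ℝ) 1,
      ‖exp (-(r • X)) * B * exp (r • (X + B))‖
        ≤ Real.exp M * ‖B‖ * Real.exp (M + 1) := by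
    intro r hr
    rw [Set.uIoc_of_le zero_le_one] at hr
    have hr0 : 0 ≤ r := le_of_lt hr.1
    have hr1 : r ≤ 1 := hr.2
    have h1 : ‖exp (-(r • X))‖ ≤ Real.exp M := by
      refine (myNormExpLe _).trans (Real.exp_le_exp.mpr ?_)
      rw [norm_neg, norm_smul, Real.norm_eq_abs, abs_of_nonneg hr0]
      calc r * ‖X‖ ≤ 1 * ‖X‖ := by gcongr
        _ = ‖X‖ := one_mul _
        _ ≤ M := hX
    have h2 : ‖exp (r • (X + B))‖ ≤ Real.exp (M + 1) := by
      refine (myNormExpLe _).trans (Real.exp_le_exp.mpr ?_)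
      rw [norm_smul, Real.norm_eq_abs, abs_of_nonneg hr0]
      calc r * ‖X + B‖ ≤ 1 * (‖X‖ + ‖B‖) := by
            gcongr
            exact norm_add_le _ _
        _ = ‖X‖ + ‖B‖ := one_mul _
        _ ≤ M + 1 := add_le_add hX hB
    calc ‖exp (-(r • X)) * B * exp (r • (X + B))‖
        ≤ ‖exp (-(r • X)) * B‖ * ‖exp (r • (X + B))‖ := norm_mul_le _ _
      _ ≤ ‖exp (-(r • X))‖ * ‖B‖ * ‖exp (r • (X + B))‖ := by
          gcongr ?_ * ?_
          · exact norm_mul_le _ _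
      _ ≤ Real.exp M * ‖B‖ * Real.exp (M + 1) := by gcongr
  have hi := intervalIntegral.norm_integral_le_of_norm_le_const hbd
  simp only [sub_zero, abs_one, mul_one] at hi
  calc ‖exp X‖ * ‖∫ r in (0:ℝ)..1, exp (-(r • X)) * B * exp (r • (X + B))‖
      ≤ Real.exp M * (Real.exp M * ‖B‖ * Real.exp (M + 1)) := by
        gcongr
        exact (myNormExpLe _).trans (Real.exp_le_exp.mpr hX)
    _ = ‖B‖ * (Real.exp M * (Real.exp M * Real.exp (M + 1))) := by ring

private lemma myContIntegrand (X B : A) :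
    Continuous fun r : ℝ => exp (-(r • X)) * B * exp (r • X) :=
  ((myContSmulNeg X).mul continuous_const).mul (myContSmul X)

noncomputable def Lmap (X : A) : A →L[ℝ] A :=
  LinearMap.mkContinuous
    { toFun := fun B => exp X * ∫ r in (0:ℝ)..1, exp (-(r • X)) * B * exp (r • X)
      map_add' := fun B C => by
        have h : (fun r : ℝ => exp (-(r • X)) * (B + C) * exp (r • X))
            = fun r => exp (-(r • X)) * B * exp (r • X)
              + exp (-(r • X)) * C * exp (r • X) := by
          funext r; noncomm_ring
        simp only [h]
        rw [intervalIntegral.integral_add ((myContIntegrand X B).intervalIntegrable 0 1)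
          ((myContIntegrand X C).intervalIntegrable 0 1), mul_add]
      map_smul' := fun c B => by
        have h : (fun r : ℝ => exp (-(r • X)) * (c • B) * exp (r • X))
            = fun r => c • (exp (-(r • X)) * B * exp (r • X)) := by
          funext r
          rw [mul_smul_comm, smul_mul_assoc]
        simp only [h]
        rw [intervalIntegral.integral_smul, mul_smul_comm]
        rfl }
    (Real.exp ‖X‖ * (Real.exp ‖X‖ * Real.exp ‖X‖))
    (fun B => by
      simp only [LinearMap.coe_mk, AddHom.coe_mk]
      refine (norm_mul_le _ _).trans ?_
      have hbd : ∀ r ∈ Set.uIoc (0:ℝ) 1,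
          ‖exp (-(r • X)) * B * exp (r • X)‖
            ≤ Real.exp ‖X‖ * ‖B‖ * Real.exp ‖X‖ := by
        intro r hr
        rw [Set.uIoc_of_le zero_le_one] at hr
        have hr0 : 0 ≤ r := le_of_lt hr.1
        have hs : ∀ Y : A, ‖Y‖ ≤ ‖X‖ → ‖exp Y‖ ≤ Real.exp ‖X‖ := fun Y hY =>
          (myNormExpLe _).trans (Real.exp_le_exp.mpr hY)
        have hsm : ‖r • X‖ ≤ ‖X‖ := by
          rw [norm_smul, Real.norm_eq_abs, abs_of_nonneg hr0]
          calc r * ‖X‖ ≤ 1 * ‖X‖ := by gcongr; exact hr.2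
            _ = ‖X‖ := one_mul _
        calc ‖exp (-(r • X)) * B * exp (r • X)‖
            ≤ ‖exp (-(r • X)) * B‖ * ‖exp (r • X)‖ := norm_mul_le _ _
          _ ≤ ‖exp (-(r • X))‖ * ‖B‖ * ‖exp (r • X)‖ := by
              gcongr ?_ * ?_
              · exact norm_mul_le _ _
          _ ≤ Real.exp ‖X‖ * ‖B‖ * Real.exp ‖X‖ := by
              gcongr
              · exact hs _ (by rwa [norm_neg])
              · exact hs _ hsm
      have hi := intervalIntegral.norm_integral_le_of_norm_le_const hbd
      simp only [sub_zero, abs_one, mul_one] at hi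
      calc ‖exp X‖ * ‖∫ r in (0:ℝ)..1, exp (-(r • X)) * B * exp (r • X)‖
          ≤ Real.exp ‖X‖ * (Real.exp ‖X‖ * ‖B‖ * Real.exp ‖X‖) := by
            gcongr
            exact myNormExpLe _
        _ = Real.exp ‖X‖ * (Real.exp ‖X‖ * Real.exp ‖X‖) * ‖B‖ := by ring)

private lemma Lmap_apply (X B : A) :
    Lmap X B = exp X * ∫ r in (0:ℝ)..1, exp (-(r • X)) * B * exp (r • X) := rfl

private lemma myHasFDerivAt (X : A) : HasFDerivAt (exp : A → A) (Lmap X) X := by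
  rw [hasFDerivAt_iff_isLittleO_nhds_zero]
  set C := Real.exp ‖X‖ * (Real.exp ‖X‖ *
    (Real.exp ‖X‖ * (Real.exp ‖X‖ * Real.exp (‖X‖ + 1)))) with hC
  have hquad : ∀ h : A, ‖h‖ ≤ 1 →
      ‖exp (X + h) - exp X - Lmap X h‖ ≤ C * (‖h‖ * ‖h‖) := by
    intro h hh
    have contA : Continuous fun r : ℝ => exp (-(r • X)) * h * exp (r • (X + h)) :=
      ((myContSmulNeg X).mul continuous_const).mul (myContSmul (X + h))
    have hdiff : exp (X + h) - exp X - Lmap X h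
        = exp X * ∫ r in (0:ℝ)..1,
            exp (-(r • X)) * h * (exp (r • (X + h)) - exp (r • X)) := by
      rw [duhamel X h, Lmap_apply, ← mul_sub]
      congr 1
      rw [← intervalIntegral.integral_sub (contA.intervalIntegrable 0 1)
        ((myContIntegrand X h).intervalIntegrable 0 1)]
      congr 1
      funext r
      rw [mul_sub]
    rw [hdiff]
    set D := Real.exp ‖X‖ * (Real.exp ‖X‖ * Real.exp (‖X‖ + 1)) with hD
    have hbd : ∀ r ∈ Set.uIoc (0:ℝ) 1,
        ‖exp (-(r • X)) * h * (exp (r • (X + h)) - exp (r • X))‖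
          ≤ Real.exp ‖X‖ * ‖h‖ * (‖h‖ * D) := by
      intro r hr
      rw [Set.uIoc_of_le zero_le_one] at hr
      have hr0 : 0 ≤ r := le_of_lt hr.1
      have hr1 : r ≤ 1 := hr.2
      have hXs : ‖r • X‖ ≤ ‖X‖ := by
        rw [norm_smul, Real.norm_eq_abs, abs_of_nonneg hr0]
        calc r * ‖X‖ ≤ 1 * ‖X‖ := by gcongr
          _ = ‖X‖ := one_mul _
      have hhs : ‖r • h‖ ≤ ‖h‖ := by
        rw [norm_smul, Real.norm_eq_abs, abs_of_nonneg hr0]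
        calc r * ‖h‖ ≤ 1 * ‖h‖ := by gcongr
          _ = ‖h‖ := one_mul _
      have hdel : ‖exp (r • (X + h)) - exp (r • X)‖ ≤ ‖h‖ * D := by
        have h2 := duhamel_bound ‖X‖ (r • X) (r • h) hXs (hhs.trans hh)
        rw [← smul_add] at h2
        exact h2.trans (by gcongr)
      calc ‖exp (-(r • X)) * h * (exp (r • (X + h)) - exp (r • X))‖
          ≤ ‖exp (-(r • X)) * h‖ * ‖exp (r • (X + h)) - exp (r • X)‖ := norm_mul_le _ _
        _ ≤ ‖exp (-(r • X))‖ * ‖h‖ * (‖h‖ * D) := by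
            gcongr ?_ * ?_
            exact norm_mul_le _ _
        _ ≤ Real.exp ‖X‖ * ‖h‖ * (‖h‖ * D) := by
            gcongr
            exact (myNormExpLe _).trans (Real.exp_le_exp.mpr (by rwa [norm_neg]))
    have hi := intervalIntegral.norm_integral_le_of_norm_le_const hbd
    simp only [sub_zero, abs_one, mul_one] at hi
    calc ‖exp X * ∫ r in (0:ℝ)..1,
          exp (-(r • X)) * h * (exp (r • (X + h)) - exp (r • X))‖
        ≤ ‖exp X‖ * ‖∫ r in (0:ℝ)..1,
            exp (-(r • X)) * h * (exp (r • (X + h)) - exp (r • X))‖ := norm_mul_le _ _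
      _ ≤ Real.exp ‖X‖ * (Real.exp ‖X‖ * ‖h‖ * (‖h‖ * D)) := by
          gcongr
          exact myNormExpLe _
      _ = C * (‖h‖ * ‖h‖) := by rw [hC, hD]; ring
  have hbig : (fun h : A => exp (X + h) - exp X - Lmap X h)
      =O[nhds 0] fun h => ‖h‖ * ‖h‖ := by
    refine IsBigO.of_bound C ?_
    filter_upwards [Metric.closedBall_mem_nhds (0:A) one_pos] with h hh
    rw [mem_closedBall_zero_iff] at hh
    have := hquad h hh
    rwa [Real.norm_of_nonneg (mul_nonneg (norm_nonneg _) (norm_nonneg _))]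
  refine hbig.trans_isLittleO ?_
  rw [isLittleO_iff]
  intro c hc
  filter_upwards [Metric.ball_mem_nhds (0:A) hc] with h hh
  rw [mem_ball_zero_iff] at hh
  rw [Real.norm_of_nonneg (mul_nonneg (norm_nonneg _) (norm_nonneg _))]
  exact mul_le_mul_of_nonneg_right hh.le (norm_nonneg h)

private lemma myRearrange (X B : A) :
    exp X * (∫ r in (0:ℝ)..1, exp (-(r • X)) * B * exp (r • X))
      = (∫ r in (0:ℝ)..1, exp (r • X) * B * exp (-(r • X))) * exp X := by
  have contRHS : Continuous fun r : ℝ => exp (r • X) * B * exp (-(r • X)) :=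
    ((myContSmul X).mul continuous_const).mul (myContSmulNeg X)
  have hmulL := ((ContinuousLinearMap.mul ℝ A (exp X)).intervalIntegral_comp_comm
      ((myContIntegrand X B).intervalIntegrable (μ := MeasureTheory.volume) 0 1)).symm
  have hmulR := (((ContinuousLinearMap.mul ℝ A).flip (exp X)).intervalIntegral_comp_comm
      (contRHS.intervalIntegrable (μ := MeasureTheory.volume) 0 1)).symm
  simp only [ContinuousLinearMap.mul_apply', ContinuousLinearMap.flip_apply] at hmulL hmulR
  rw [hmulL, hmulR]
  have e1 : ∀ r : ℝ, exp X * (exp (-(r • X)) * B * exp (r • X))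
      = exp ((1 - r) • X) * B * exp (r • X) := by
    intro r
    have h : exp ((1 - r) • X) = exp X * exp (-(r • X)) := by
      rw [show (1 - r) = 1 + (-r) by ring, myExpAdd, one_smul, neg_smul]
    rw [h]
    simp only [mul_assoc]
  have e2 : ∀ r : ℝ, exp (r • X) * B * exp (-(r • X)) * exp X
      = exp (r • X) * B * exp ((1 - r) • X) := by
    intro r
    have h : exp ((1 - r) • X) = exp (-(r • X)) * exp X := by
      rw [show (1 - r) = (-r) + 1 by ring, myExpAdd, one_smul, neg_smul]
    rw [h]
    simp only [mul_assoc]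
  simp_rw [e1, e2]
  have hsub := intervalIntegral.integral_comp_sub_left (a := (0:ℝ)) (b := 1)
      (fun u => exp (u • X) * B * exp ((1 - u) • X)) 1
  simp only [sub_zero, sub_self] at hsub
  calc (∫ r in (0:ℝ)..1, exp ((1 - r) • X) * B * exp (r • X))
      = ∫ x in (0:ℝ)..1,
          (fun u => exp (u • X) * B * exp ((1 - u) • X)) (1 - x) := by
        congr 1
        funext r
        simp [sub_sub_cancel]
    _ = _ := hsub

theorem key (Ω : ℝ → A) (t : ℝ) (Ω' : A) (hΩ : HasDerivAt Ω Ω' t) :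
    HasDerivAt (fun s => exp (Ω s))
      ((∫ r in (0:ℝ)..1, exp (r • Ω t) * Ω' * exp (-(r • Ω t))) * exp (Ω t)) t := by
  have hF := (myHasFDerivAt (Ω t)).comp_hasDerivAt t hΩ
  rw [← myRearrange, ← Lmap_apply]
  exact hF

end general

section linfty

attribute [local instance] Matrix.linftyOpNormedRing Matrix.linftyOpNormedAlgebra
  Matrix.linftyOpNormedSpace

variable {n : ℕ}

theorem contAux [Nonempty (Fin n)] (X B : Matrix (Fin n) (Fin n) ℂ) :
    Continuous fun r : ℝ => exp (r • X) * B * exp (-(r • X)) := by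
  exact ((myContSmul X).mul continuous_const).mul (myContSmulNeg X)

noncomputable def entryL (i j : Fin n) : Matrix (Fin n) (Fin n) ℂ →L[ℝ] ℂ :=
  LinearMap.mkContinuous
    { toFun := fun M => M i j
      map_add' := fun _ _ => rfl
      map_smul' := fun _ _ => rfl } 1
    (fun M => by
      rw [one_mul]
      have h1 : ‖M i j‖₊ ≤ ∑ j' : Fin n, ‖M i j'‖₊ :=
        Finset.single_le_sum (f := fun j' => ‖M i j'‖₊) (fun _ _ => zero_le')
          (Finset.mem_univ j)
      have h2 : (∑ j' : Fin n, ‖M i j'‖₊) ≤ ‖M‖₊ := by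
        rw [Matrix.linfty_opNNNorm_def]
        exact Finset.le_sup (f := fun i' => ∑ j' : Fin n, ‖M i' j'‖₊) (Finset.mem_univ i)
      exact_mod_cast h1.trans h2)

theorem integral_entry_linfty [Nonempty (Fin n)] (X B : Matrix (Fin n) (Fin n) ℂ) (i j : Fin n) :
    (∫ r in (0:ℝ)..1, exp (r • X) * B * exp (-(r • X))) i j
      = ∫ r in (0:ℝ)..1, (exp (r • X) * B * exp (-(r • X))) i j :=
  ((entryL i j).intervalIntegral_comp_comm
    ((contAux X B).intervalIntegrable (μ := MeasureTheory.volume) 0 1)).symm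

theorem key2 {n : ℕ} (hn : 0 < n) (Ω : ℝ → Matrix (Fin n) (Fin n) ℂ) (t : ℝ)
    (Ω' D : Matrix (Fin n) (Fin n) ℂ)
    (hΩ : Tendsto (slope Ω t) (nhdsWithin t {t}ᶜ) (nhds Ω'))
    (hD : ∀ i j, D i j = ∫ r in (0:ℝ)..1,
        (exp (r • Ω t) * Ω' * exp (-(r • Ω t))) i j) :
    Tendsto (slope (fun s => exp (Ω s)) t) (nhdsWithin t {t}ᶜ)
      (nhds (D * exp (Ω t))) := by
  haveI : Nonempty (Fin n) := ⟨⟨0, hn⟩⟩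
  replace hΩ := hasDerivAt_iff_tendsto_slope.mpr hΩ
  refine hasDerivAt_iff_tendsto_slope.mp ?_
  have h := key Ω t Ω' hΩ
  have hDeq : D = ∫ r in (0:ℝ)..1, exp (r • Ω t) * Ω' * exp (-(r • Ω t)) := by
    ext i j
    rw [hD i j, integral_entry_linfty]
  rw [hDeq]
  exact h

end linfty

attribute [local instance] Matrix.normedAddCommGroup Matrix.normedSpace

noncomputable def entryS {n : ℕ} (i j : Fin n) : Matrix (Fin n) (Fin n) ℂ →L[ℝ] ℂ :=
  LinearMap.mkContinuous
    { toFun := fun M => M i j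
      map_add' := fun _ _ => rfl
      map_smul' := fun _ _ => rfl } 1
    (fun M => by
      rw [one_mul]
      exact (norm_le_pi_norm (M i) j).trans (norm_le_pi_norm M i))

/-- If `Ω : ℝ → M_n(ℂ)` is differentiable at `t` with derivative `Ω'`, then
`s ↦ exp (Ω s)` is differentiable at `t` with derivative
`(∫_0^1 exp (r • Ω t) * Ω' * exp (−r • Ω t) dr) * exp (Ω t)`. -/
theorem hasDerivAt_exp_eq_integral {n : ℕ} (Ω : ℝ → Matrix (Fin n) (Fin n) ℂ) (t : ℝ)
    (Ω' : Matrix (Fin n) (Fin n) ℂ) (hΩ : HasDerivAt Ω Ω' t) :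
    HasDerivAt (fun s => NormedSpace.exp (Ω s))
      ((∫ r in (0:ℝ)..1,
          NormedSpace.exp (r • Ω t) * Ω' * NormedSpace.exp (-(r • Ω t))) *
        NormedSpace.exp (Ω t)) t := by
  rcases Nat.eq_zero_or_pos n with hn | hn
  · subst hn
    have h0 : (fun s => exp (Ω s)) = fun _ => exp (Ω t) :=
      funext fun s => Subsingleton.elim _ _
    rw [h0]
    rw [show ((∫ r in (0:ℝ)..1, exp (r • Ω t) * Ω' * exp (-(r • Ω t))) * exp (Ω t))
      = 0 from Subsingleton.elim _ _]
    exact hasDerivAt_const t _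
  haveI : Nonempty (Fin n) := ⟨⟨0, hn⟩⟩
  have hcont : Continuous fun r : ℝ => exp (r • Ω t) * Ω' * exp (-(r • Ω t)) :=
    contAux (Ω t) Ω'
  have hD : ∀ i j, (∫ r in (0:ℝ)..1,
      exp (r • Ω t) * Ω' * exp (-(r • Ω t))) i j
      = ∫ r in (0:ℝ)..1, (exp (r • Ω t) * Ω' * exp (-(r • Ω t))) i j :=
    fun i j => ((entryS i j).intervalIntegral_comp_comm
      (hcont.intervalIntegrable (μ := MeasureTheory.volume) 0 1)).symm
  replace hΩ := hasDerivAt_iff_tendsto_slope.mp hΩ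
  refine hasDerivAt_iff_tendsto_slope.mpr ?_
  exact key2 hn Ω t Ω' _ hΩ hD
end

section
/- Let m ≥ 1 and let n_1, …, n_m be positive integers such that for some index k one has n_k > 1 + Σ_{i≠k} n_i. Then the iterated integral ξ(n_1,…,n_m) = ∫_0^1 dx_1 ∫_0^{x_1} dx_2 ⋯ ∫_0^{x_{m−1}} dx_m ∏_{i=1}^m P_{n_i−1}(x_i) equals 0. (This is property (P2): a commutator coefficient vanishes whenever one Legendre index exceeds the sum of all the others by at least two.) -/
/-- Shifted Legendre polynomials on `[0,1]`:
`P 0 x = 1`, `P 1 x = 2x − 1`,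
`P (n+1) x = ((2n+1)/(n+1)) (2x−1) P n x − (n/(n+1)) P (n−1) x`. -/
noncomputable def shiftedLegendre : ℕ → ℝ → ℝ
  | 0 => fun _ => 1
  | 1 => fun x => 2 * x - 1
  | n + 2 => fun x =>
      ((2 * (n + 1) + 1 : ℝ) / (n + 2)) * (2 * x - 1) * shiftedLegendre (n + 1) x -
        ((n + 1 : ℝ) / (n + 2)) * shiftedLegendre n x

open Polynomial

noncomputable def legPoly : ℕ → Polynomial ℝ
  | 0 => 1
  | 1 => C 2 * X - 1
  | n + 2 => C ((2 * (n + 1) + 1 : ℝ) / (n + 2)) * (C 2 * X - 1) * legPoly (n + 1) -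
      C ((n + 1 : ℝ) / (n + 2)) * legPoly n

lemma shiftedLegendre_eq_eval (n : ℕ) (x : ℝ) : shiftedLegendre n x = (legPoly n).eval x := by
  induction n using Nat.twoStepInduction generalizing x with
  | zero => simp [_root_.shiftedLegendre, legPoly]
  | one => simp [_root_.shiftedLegendre, legPoly]
  | more n ih1 ih2 =>
    simp [_root_.shiftedLegendre, legPoly, ih1, ih2]

lemma legPoly_natDegree (n : ℕ) : (legPoly n).natDegree ≤ n := by
  induction n using Nat.twoStepInduction with
  | zero => simp [legPoly]
  | one => simp only [legPoly]; compute_degree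
  | more n ih1 ih2 =>
    simp only [legPoly]
    refine (natDegree_sub_le _ _).trans (max_le ?_ ?_)
    · refine (natDegree_mul_le).trans ?_
      have h1 : (C ((2 * (n+1) + 1 : ℝ) / (n + 2)) * (C 2 * X - 1)).natDegree ≤ 1 := by
        refine (natDegree_C_mul_le _ _).trans ?_
        compute_degree
      omega
    · exact (natDegree_C_mul_le _ _).trans (by omega)

noncomputable def prim (p : Polynomial ℝ) : Polynomial ℝ :=
  p.sum fun k a => C (a / (k + 1)) * X ^ (k + 1)

lemma derivative_prim (p : Polynomial ℝ) : derivative (prim p) = p := by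
  unfold prim
  rw [Polynomial.sum_def, map_sum]
  conv_rhs => rw [← Polynomial.sum_C_mul_X_pow_eq p]
  rw [Polynomial.sum_def]
  refine Finset.sum_congr rfl fun k hk => ?_
  rw [derivative_C_mul, derivative_X_pow]
  push_cast
  rw [← mul_assoc, ← C_mul, div_mul_cancel₀]
  positivity

lemma prim_eval_zero (p : Polynomial ℝ) : (prim p).eval 0 = 0 := by
  unfold prim
  rw [Polynomial.sum_def, eval_finset_sum]
  refine Finset.sum_eq_zero fun k hk => by simp

lemma prim_natDegree (p : Polynomial ℝ) : (prim p).natDegree ≤ p.natDegree + 1 := by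
  unfold prim
  rw [Polynomial.sum_def]
  refine natDegree_sum_le_of_forall_le _ _ fun k hk => ?_
  refine (natDegree_C_mul_le _ _).trans ?_
  rw [natDegree_X_pow]
  exact Nat.succ_le_succ (le_natDegree_of_mem_supp _ hk)

lemma integral_eval (p : Polynomial ℝ) (x : ℝ) :
    ∫ t in (0:ℝ)..x, p.eval t = (prim p).eval x := by
  have h : ∀ t : ℝ, HasDerivAt (fun y => (prim p).eval y) (p.eval t) t := by
    intro t
    have := (prim p).hasDerivAt t
    rwa [derivative_prim] at this
  rw [intervalIntegral.integral_eq_sub_of_hasDerivAt (fun t _ => h t)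
    ((p.continuous_aeval).intervalIntegrable _ _), prim_eval_zero, sub_zero]

noncomputable def J (p : Polynomial ℝ) : ℝ := ∫ x in (0:ℝ)..1, p.eval x

lemma J_eq (p : Polynomial ℝ) : J p = (prim p).eval 1 := integral_eval p 1

lemma J_sub (p q : Polynomial ℝ) : J (p - q) = J p - J q := by
  unfold J
  simp only [eval_sub]
  exact intervalIntegral.integral_sub ((p.continuous_aeval).intervalIntegrable _ _)
    ((q.continuous_aeval).intervalIntegrable _ _)

lemma J_Cmul (a : ℝ) (p : Polynomial ℝ) : J (C a * p) = a * J p := by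
  unfold J
  simp only [eval_mul, eval_C]
  exact intervalIntegral.integral_const_mul _ _

lemma J_pow (j : ℕ) : J (X ^ j) = 1 / (j + 1) := by
  unfold J
  simp [integral_pow]

noncomputable def fval (n j : ℕ) : ℝ :=
  if n ≤ j then ((Nat.factorial j : ℝ))^2 /
    ((Nat.factorial (j - n) : ℝ) * (Nat.factorial (j + n + 1) : ℝ)) else 0

lemma fval_of_le {n j : ℕ} (h : n ≤ j) : fval n j = ((Nat.factorial j : ℝ))^2 /
    ((Nat.factorial (j - n) : ℝ) * (Nat.factorial (j + n + 1) : ℝ)) := if_pos h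

lemma fval_of_gt {n j : ℕ} (h : j < n) : fval n j = 0 := if_neg (by omega)

lemma fact_ne (m : ℕ) : ((Nat.factorial m : ℝ)) ≠ 0 :=
  Nat.cast_ne_zero.mpr (Nat.factorial_ne_zero m)

lemma fact_succ (m : ℕ) : ((Nat.factorial (m+1) : ℝ)) = (m+1) * (Nat.factorial m : ℝ) := by
  rw [Nat.factorial_succ]; push_cast; ring

lemma J_orth : ∀ n j : ℕ, J (X ^ j * legPoly n) = fval n j := by
  intro n
  induction n using Nat.twoStepInduction with
  | zero =>
    intro j
    rw [show legPoly 0 = 1 from rfl, mul_one, J_pow, fval_of_le (Nat.zero_le j)]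
    rw [Nat.sub_zero, fact_succ j]
    field_simp [fact_ne]
  | one =>
    intro j
    have e : (X ^ j * legPoly 1 : Polynomial ℝ) = C 2 * X ^ (j+1) - X ^ j := by
      rw [show legPoly 1 = C 2 * X - 1 from rfl]; ring
    rw [e, J_sub, J_Cmul, J_pow, J_pow]
    rcases j with _ | d
    · norm_num [fval_of_gt]
    · rw [fval_of_le (by omega), show d + 1 - 1 = d from rfl,
        show d + 1 + 1 + 1 = (d+1)+1+1 from rfl, fact_succ (d+1+1), fact_succ (d+1), fact_succ d]
      push_cast
      field_simp [fact_ne]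
      ring
  | more n ih2 ih1 =>
    -- careful: check which ih is which
    intro j
    have e : (X ^ j * legPoly (n+2) : Polynomial ℝ) =
        C ((2 * ((n:ℝ) + 1) + 1) / ((n:ℝ) + 2)) *
          (C 2 * (X ^ (j+1) * legPoly (n+1)) - X ^ j * legPoly (n+1)) -
        C (((n:ℝ) + 1) / ((n:ℝ) + 2)) * (X ^ j * legPoly n) := by
      rw [show legPoly (n+2) = C ((2 * ((n:ℕ) + 1) + 1 : ℝ) / ((n:ℕ) + 2)) * (C 2 * X - 1) * legPoly (n + 1) -
        C (((n:ℕ) + 1 : ℝ) / ((n:ℕ) + 2)) * legPoly n from rfl]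
      push_cast
      ring
    rw [e, J_sub, J_Cmul, J_Cmul, J_sub, J_Cmul, ih1, ih1, ih2]
    have hn2 : ((n:ℝ) + 2) ≠ 0 := by positivity
    rcases Nat.lt_or_ge j n with h | h
    · rw [fval_of_gt (by omega), fval_of_gt (by omega), fval_of_gt (by omega),
        fval_of_gt (by omega)]
      ring
    · obtain ⟨d, rfl⟩ : ∃ d, j = n + d := ⟨j - n, by omega⟩
      rcases d with _ | d
      · -- j = n
        simp only [Nat.add_zero]
        rw [fval_of_gt (n := n+2) (j := n) (by omega), fval_of_gt (n := n+1) (j := n) (by omega),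
          fval_of_le (le_refl (n+1)), fval_of_le (le_refl n)]
        rw [show n + 1 - (n+1) = 0 from by omega, show n - n = 0 from by omega,
          show n + 1 + (n + 1) + 1 = (2*n+1)+1+1 from by omega,
          show n + n + 1 = 2*n+1 from by omega]
        rw [fact_succ (2*n+1+1), fact_succ (2*n+1), fact_succ n]
        push_cast
        field_simp [fact_ne]
        ring
      · rcases d with _ | d
        · -- j = n + 1
          simp only [Nat.zero_add]
          rw [fval_of_gt (n := n+2) (j := n+1) (by omega),
            fval_of_le (by omega : n + 1 ≤ n + 1 + 1), fval_of_le (by omega : n + 1 ≤ n + 1),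
            fval_of_le (by omega : n ≤ n + 1)]
          rw [show n + 1 + 1 - (n + 1) = 1 from by omega, show n + 1 - (n+1) = 0 from by omega,
            show n + 1 - n = 1 from by omega,
            show n + 1 + 1 + (n + 1) + 1 = (2*n+2)+1+1 from by omega,
            show n + 1 + (n + 1) + 1 = (2*n+2)+1 from by omega,
            show n + 1 + n + 1 = 2*n+2 from by omega,
            show n + 1 + 1 = (n+1)+1 from by omega]
          rw [fact_succ (2*n+2+1), fact_succ (2*n+2), fact_succ (n+1), fact_succ n]
          push_cast
          field_simp [fact_ne]
          ring
        · -- j = n + d + 2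
          have hj : n + (d + 1 + 1) = n + (d + 2) := by omega
          rw [hj]
          rw [fval_of_le (by omega : n + 2 ≤ n + (d+2)),
            fval_of_le (by omega : n + 1 ≤ n + (d+2) + 1),
            fval_of_le (by omega : n + 1 ≤ n + (d+2)),
            fval_of_le (by omega : n ≤ n + (d+2))]
          rw [show n + (d+2) - (n + 2) = d from by omega,
            show n + (d+2) + 1 - (n + 1) = d + 2 from by omega,
            show n + (d+2) - (n + 1) = d + 1 from by omega,
            show n + (d+2) - n = d + 2 from by omega,
            show n + (d+2) + (n + 2) + 1 = (2*n+d+3)+1+1 from by omega,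
            show n + (d+2) + 1 + (n + 1) + 1 = (2*n+d+3)+1+1 from by omega,
            show n + (d+2) + (n + 1) + 1 = (2*n+d+3)+1 from by omega,
            show n + (d+2) + n + 1 = 2*n+d+3 from by omega,
            show n + (d+2) + 1 = (n+d+2)+1 from by omega,
            show n + (d+2) = n+d+2 from by omega]
          rw [fact_succ (2*n+d+3+1), fact_succ (2*n+d+3), fact_succ (n+d+2),
            fact_succ (d+1), fact_succ d]
          push_cast
          field_simp [fact_ne]
          ring

lemma J_sum {s : Finset ℕ} (p : ℕ → Polynomial ℝ) :
    J (∑ k ∈ s, p k) = ∑ k ∈ s, J (p k) := by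
  unfold J
  simp only [eval_finset_sum]
  exact intervalIntegral.integral_finset_sum fun k _ =>
    ((p k).continuous_aeval).intervalIntegrable _ _

lemma J_mul_leg_zero {n : ℕ} (u : Polynomial ℝ) (h : u.natDegree < n) :
    J (u * legPoly n) = 0 := by
  conv_lhs => rw [← Polynomial.sum_C_mul_X_pow_eq u, Polynomial.sum_def, Finset.sum_mul]
  rw [J_sum]
  refine Finset.sum_eq_zero fun k hk => ?_
  rw [mul_assoc, J_Cmul, J_orth, fval_of_gt (lt_of_le_of_lt (le_natDegree_of_mem_supp _ hk) h),
    mul_zero]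


lemma J_derivative (r : Polynomial ℝ) : J (derivative r) = r.eval 1 - r.eval 0 := by
  unfold J
  rw [intervalIntegral.integral_eq_sub_of_hasDerivAt (fun t _ => r.hasDerivAt t)
    (((derivative r).continuous_aeval).intervalIntegrable _ _)]

/-- The time-ordered iterated integral
`ξ(n₁,…,n_m) = ∫_0^1 dx₁ ∫_0^{x₁} dx₂ ⋯ ∫_0^{x_{m−1}} dx_m ∏ᵢ P_{nᵢ−1}(xᵢ)`,
defined recursively: `xi [n₁,…,n_m] x = ∫_0^x P_{n₁−1}(y) · xi [n₂,…,n_m] y dy`. -/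
noncomputable def xi : List ℕ → ℝ → ℝ
  | [], _ => 1
  | n :: l, x => ∫ y in (0:ℝ)..x, shiftedLegendre (n - 1) y * xi l y

lemma xi_cons_rep (n : ℕ) (l : List ℕ) (q : Polynomial ℝ) (hq : ∀ x, xi l x = q.eval x)
    (x : ℝ) : xi (n :: l) x = (prim (legPoly (n-1) * q)).eval x := by
  rw [show xi (n :: l) x = ∫ y in (0:ℝ)..x, shiftedLegendre (n-1) y * xi l y from rfl,
    ← integral_eval]
  refine intervalIntegral.integral_congr fun y _ => ?_
  simp [shiftedLegendre_eq_eval, hq]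

lemma xi_poly : ∀ l : List ℕ, (∀ n ∈ l, 0 < n) →
    ∃ p : Polynomial ℝ, (∀ x, xi l x = p.eval x) ∧ p.natDegree ≤ l.sum := by
  intro l
  induction l with
  | nil => exact fun _ => ⟨1, fun x => by simp [xi], by simp⟩
  | cons n t ih =>
    intro hpos
    obtain ⟨q, hq, hdeg⟩ := ih (fun m hm => hpos m (List.mem_cons_of_mem _ hm))
    refine ⟨prim (legPoly (n-1) * q), fun x => xi_cons_rep n t q hq x, ?_⟩
    refine (prim_natDegree _).trans ?_
    have h2 := natDegree_mul_le (p := legPoly (n-1)) (q := q)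
    have h1 := legPoly_natDegree (n-1)
    have hn := hpos n (List.mem_cons_self)
    simp only [List.sum_cons]
    omega

lemma keyL : ∀ l1 : List ℕ, (∀ a ∈ l1, 0 < a) → ∀ l2 : List ℕ, ∀ e : ℕ, ∀ p : Polynomial ℝ,
    (∀ x, xi l2 x = p.eval x) →
    (∀ u : Polynomial ℝ, u.natDegree ≤ e → J (u * p) = 0) →
    p.eval 1 = 0 → l1.sum ≤ e + 1 → xi (l1 ++ l2) 1 = 0 := by
  intro l1
  induction l1 using List.reverseRecOn with
  | nil =>
    intro _ l2 e p hrep _ h1 _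
    simpa [hrep 1] using h1
  | append_singleton t a ih =>
    intro hpos l2 e p hrep horth h1 hsum
    have ha : 0 < a := hpos a (by simp)
    have hpost : ∀ b ∈ t, 0 < b := fun b hb => hpos b (by simp [hb])
    have hsum' : t.sum + a ≤ e + 1 := by
      have := hsum
      simp only [List.sum_append, List.sum_cons, List.sum_nil] at this
      omega
    have hae1 : a - 1 ≤ e := by omega
    set p' := prim (legPoly (a-1) * p) with hp'def
    have hrep' : ∀ x, xi (a :: l2) x = p'.eval x := xi_cons_rep a l2 p hrep
    have hder : derivative p' = legPoly (a-1) * p := derivative_prim _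
    have hp'1 : p'.eval 1 = 0 := by
      rw [hp'def, ← J_eq]
      exact horth _ ((legPoly_natDegree _).trans hae1)
    rw [show (t ++ [a]) ++ l2 = t ++ (a :: l2) by simp]
    by_cases ht : t = []
    · subst ht
      simp only [List.nil_append]
      rw [hrep' 1]
      exact hp'1
    · have htpos : 1 ≤ t.sum := by
        cases t with
        | nil => exact absurd rfl ht
        | cons b t' =>
          have := hpost b (List.mem_cons_self)
          simp only [List.sum_cons]
          omega
      have hae : a ≤ e := by omega
      refine ih hpost (a :: l2) (e - a) p' hrep' ?_ hp'1 (by omega)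
      intro u hu
      have hid : u * p' = derivative (prim u * p') - (prim u * legPoly (a-1)) * p := by
        rw [derivative_mul, derivative_prim, hder]
        ring
      rw [hid, J_sub, J_derivative, horth (prim u * legPoly (a-1)) ?_]
      · simp [eval_mul, hp'1, prim_eval_zero]
      · have h2 := natDegree_mul_le (p := prim u) (q := legPoly (a-1))
        have h3 := prim_natDegree u
        have h4 := legPoly_natDegree (a-1)
        omega


/-- Property (P2): if some index `n_k` exceeds the sum of the others by at least two,
i.e. `n_k > 1 + Σ_{i≠k} nᵢ` (the `nᵢ` positive, `m ≥ 1`), then `ξ(n₁,…,n_m) = 0`. -/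
theorem xi_eq_zero_of_large_index (l : List ℕ) (hl : l ≠ []) (hpos : ∀ n ∈ l, 0 < n)
    (hk : ∃ k : Fin l.length, 1 + (l.eraseIdx (k : ℕ)).sum < l.get k) :
    xi l 1 = 0 := by
  obtain ⟨k, hk⟩ := hk
  set l1 := l.take k with hl1def
  set n := l.get k with hndef
  set l2 := l.drop (k+1) with hl2def
  have hdecomp : l = l1 ++ n :: l2 := by
    conv_lhs => rw [← List.take_append_drop k l]
    rw [List.drop_eq_getElem_cons k.isLt]
    rfl
  have hsum_erase : (l.eraseIdx (k : ℕ)).sum = l1.sum + l2.sum := by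
    rw [List.eraseIdx_eq_take_drop_succ, List.sum_append]
  have hcond : 1 + l1.sum + l2.sum < n := by omega
  have hn : 0 < n := hpos n (l.get_mem k)
  have hpos1 : ∀ a ∈ l1, 0 < a := fun a haa => hpos a (List.mem_of_mem_take haa)
  have hpos2 : ∀ a ∈ l2, 0 < a := fun a haa => hpos a (List.mem_of_mem_drop haa)
  obtain ⟨p2, hp2, hdeg2⟩ := xi_poly l2 hpos2
  set p := prim (legPoly (n-1) * p2) with hpdef
  have hrep : ∀ x, xi (n :: l2) x = p.eval x := xi_cons_rep n l2 p2 hp2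
  have hp1 : p.eval 1 = 0 := by
    rw [hpdef, ← J_eq, show legPoly (n-1) * p2 = p2 * legPoly (n-1) from mul_comm _ _]
    exact J_mul_leg_zero p2 (by omega)
  rw [hdecomp]
  by_cases hl1 : l1 = []
  · simp only [hl1, List.nil_append]
    rw [hrep 1]
    exact hp1
  · have hl1sum : 1 ≤ l1.sum := by
      cases hx : l1 with
      | nil => exact absurd hx hl1
      | cons b t' =>
        have := hpos1 b (by rw [hx]; exact List.mem_cons_self)
        simp only [List.sum_cons]
        omega
    have hder : derivative p = legPoly (n-1) * p2 := derivative_prim _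
    refine keyL l1 hpos1 (n :: l2) (n - 3 - l2.sum) p hrep ?_ hp1 (by omega)
    intro u hu
    have hid : u * p = derivative (prim u * p) - (prim u * p2) * legPoly (n-1) := by
      rw [derivative_mul, derivative_prim, hder]
      ring
    rw [hid, J_sub, J_derivative, J_mul_leg_zero (prim u * p2) ?_]
    · simp [eval_mul, hp1, prim_eval_zero]
    · have h2 := natDegree_mul_le (p := prim u) (q := p2)
      have h3 := prim_natDegree u
      omega
end

section
/- Let N be an even positive integer, let m ≥ 1, and let n_1, …, n_m be positive integers with n_1 + ⋯ + n_m ≤ N and with 2·n_k > N for some index k. Then the iterated integral ξ(n_1,…,n_m) = ∫_0^1 dx_1 ∫_0^{x_1} dx_2 ⋯ ∫_0^{x_{m−1}} dx_m ∏_{i=1}^m P_{n_i−1}(x_i) equals 0. Consequently, in the N-th order truncation of the Magnus expansion only the Legendre coefficients A_1, …, A_{N/2} can occur. -/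
open Polynomial intervalIntegral

/-! ### The shifted Legendre polynomials as actual polynomials -/

noncomputable def legP : ℕ → Polynomial ℝ
  | 0 => 1
  | 1 => 2 * X - 1
  | n + 2 => C ((2 * (n + 1) + 1 : ℝ) / (n + 2)) * ((2 * X - 1) * legP (n + 1))
      - C ((n + 1 : ℝ) / (n + 2)) * legP n

lemma legP_two_add (n : ℕ) : legP (n + 2)
    = C ((2 * (n + 1) + 1 : ℝ) / (n + 2)) * ((2 * X - 1) * legP (n + 1))
      - C ((n + 1 : ℝ) / (n + 2)) * legP n := rfl

lemma legP_eval_aux (n : ℕ) : (∀ x, shiftedLegendre n x = (legP n).eval x)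
    ∧ (∀ x, shiftedLegendre (n+1) x = (legP (n+1)).eval x) := by
  induction n with
  | zero => constructor <;> intro x <;> simp [_root_.shiftedLegendre, legP]
  | succ n ih =>
    refine ⟨ih.2, fun x => ?_⟩
    show shiftedLegendre (n+2) x = _
    rw [_root_.shiftedLegendre, legP_two_add]
    simp only [ih.1, ih.2, eval_sub, eval_mul, eval_C, eval_add, eval_ofNat, eval_one, eval_X]
    ring

lemma legP_eval (n : ℕ) (x : ℝ) : shiftedLegendre n x = (legP n).eval x :=
  (legP_eval_aux n).1 x

lemma twoXsub_natDegree : (2 * X - 1 : ℝ[X]).natDegree ≤ 1 := by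
  apply le_trans (natDegree_sub_le _ _)
  simp only [max_le_iff, natDegree_one, Nat.zero_le, and_true]
  exact le_trans natDegree_mul_le (by simp)

lemma legP_natDegree_aux (n : ℕ) :
    (legP n).natDegree ≤ n ∧ (legP (n+1)).natDegree ≤ n+1 := by
  induction n with
  | zero =>
    refine ⟨by simp [legP], ?_⟩
    rw [show legP 1 = 2 * X - 1 from rfl]
    exact twoXsub_natDegree
  | succ n ih =>
    refine ⟨ih.2, ?_⟩
    rw [legP_two_add]
    apply le_trans (natDegree_sub_le _ _)
    simp only [max_le_iff]
    constructor
    · apply le_trans natDegree_mul_le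
      rw [natDegree_C, zero_add]
      have h2 := le_trans natDegree_mul_le (Nat.add_le_add twoXsub_natDegree ih.2)
      omega
    · apply le_trans natDegree_mul_le
      rw [natDegree_C, zero_add]
      omega

lemma legP_natDegree (n : ℕ) : (legP n).natDegree ≤ n := (legP_natDegree_aux n).1

/-! ### Moments of the shifted Legendre polynomials -/

noncomputable def Mo (n j : ℕ) : ℝ :=
  if j < n then 0 else (j.factorial : ℝ)^2 / ((j-n).factorial * (j+n+1).factorial)

lemma fact_ne_s9 (k : ℕ) : ((k.factorial : ℝ)) ≠ 0 :=
  Nat.cast_ne_zero.mpr (Nat.factorial_ne_zero _)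

lemma Mo_rec (n j : ℕ) : Mo (n+2) j
    = ((2 * (n+1) + 1 : ℝ)/(n+2)) * (2 * Mo (n+1) (j+1) - Mo (n+1) j)
      - ((n+1 : ℝ)/(n+2)) * Mo n j := by
  have hn2 : ((n:ℝ)+2) ≠ 0 := by positivity
  rcases lt_or_ge j n with hj | hj
  · rw [Mo, if_pos (by omega), Mo, if_pos (by omega), Mo, if_pos (by omega),
      Mo, if_pos (by omega)]
    ring
  rcases eq_or_lt_of_le hj with rfl | hj1
  · -- j = n
    rw [Mo, if_pos (by omega), Mo, if_neg (by omega), Mo, if_pos (by omega),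
      Mo, if_neg (by omega)]
    have e1 : n + 1 - (n+1) = 0 := by omega
    have e2 : n - n = 0 := by omega
    rw [e1, e2]
    have e3 : n + 1 + (n+1) + 1 = 2*n+3 := by omega
    have e4 : n + n + 1 = 2*n+1 := by omega
    rw [e3, e4]
    have f1 : (((2*n+3).factorial : ℝ)) = (2*(n:ℝ)+3) * (2*(n:ℝ)+2) * ((2*n+1).factorial : ℝ) := by
      rw [show 2*n+3 = (2*n+2)+1 from by omega, Nat.factorial_succ,
        show 2*n+2 = (2*n+1)+1 from by omega, Nat.factorial_succ]
      push_cast; ring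
    have f2 : (((n+1).factorial : ℝ)) = ((n:ℝ)+1) * (n.factorial : ℝ) := by
      rw [Nat.factorial_succ]; push_cast; ring
    rw [f1, f2, Nat.factorial_zero]
    field_simp
    ring
  rcases eq_or_lt_of_le (show n + 1 ≤ j from hj1) with rfl | hj2
  · -- j = n+1
    rw [Mo, if_pos (by omega), Mo, if_neg (by omega), Mo, if_neg (by omega),
      Mo, if_neg (by omega)]
    have e1 : n + 1 + 1 - (n+1) = 1 := by omega
    have e2 : n + 1 - (n+1) = 0 := by omega
    have e3 : n + 1 - n = 1 := by omega
    rw [e1, e2, e3]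
    have e4 : n + 1 + 1 + (n+1) + 1 = 2*n+4 := by omega
    have e5 : n + 1 + (n+1) + 1 = 2*n+3 := by omega
    have e6 : n + 1 + n + 1 = 2*n+2 := by omega
    rw [e4, e5, e6]
    have f1 : (((2*n+4).factorial : ℝ)) = (2*(n:ℝ)+4) * (2*(n:ℝ)+3) * ((2*n+2).factorial : ℝ) := by
      rw [show 2*n+4 = (2*n+3)+1 from by omega, Nat.factorial_succ,
        show 2*n+3 = (2*n+2)+1 from by omega, Nat.factorial_succ]
      push_cast; ring
    have f2 : (((2*n+3).factorial : ℝ)) = (2*(n:ℝ)+3) * ((2*n+2).factorial : ℝ) := by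
      rw [show 2*n+3 = (2*n+2)+1 from by omega, Nat.factorial_succ]
      push_cast; ring
    have f3 : (((n+1+1).factorial : ℝ)) = ((n:ℝ)+2) * ((n:ℝ)+1) * (n.factorial : ℝ) := by
      rw [Nat.factorial_succ, Nat.factorial_succ]; push_cast; ring
    have f4 : (((n+1).factorial : ℝ)) = ((n:ℝ)+1) * (n.factorial : ℝ) := by
      rw [Nat.factorial_succ]; push_cast; ring
    rw [f1, f2, f3, f4, Nat.factorial_one, Nat.factorial_zero]
    have h22 := fact_ne_s9 (2*n+2)
    have hnf := fact_ne_s9 n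
    field_simp
    ring
  · -- j ≥ n+2
    obtain ⟨s, rfl⟩ : ∃ s, j = n + 2 + s := ⟨j - (n+2), by omega⟩
    rw [Mo, if_neg (by omega), Mo, if_neg (by omega), Mo, if_neg (by omega),
      Mo, if_neg (by omega)]
    have e1 : n + 2 + s - (n+2) = s := by omega
    have e2 : n + 2 + s + 1 - (n+1) = s + 2 := by omega
    have e3 : n + 2 + s - (n+1) = s + 1 := by omega
    have e4 : n + 2 + s - n = s + 2 := by omega
    rw [e1, e2, e3, e4]
    have e5 : n + 2 + s + (n+2) + 1 = 2*n+s+5 := by omega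
    have e6 : n + 2 + s + 1 + (n+1) + 1 = 2*n+s+5 := by omega
    have e7 : n + 2 + s + (n+1) + 1 = 2*n+s+4 := by omega
    have e8 : n + 2 + s + n + 1 = 2*n+s+3 := by omega
    rw [e5, e6, e7, e8]
    have f1 : (((2*n+s+5).factorial : ℝ))
        = (2*(n:ℝ)+(s:ℝ)+5) * (2*(n:ℝ)+(s:ℝ)+4) * ((2*n+s+3).factorial : ℝ) := by
      rw [show 2*n+s+5 = (2*n+s+4)+1 from by omega, Nat.factorial_succ,
        show 2*n+s+4 = (2*n+s+3)+1 from by omega, Nat.factorial_succ]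
      push_cast; ring
    have f2 : (((2*n+s+4).factorial : ℝ)) = (2*(n:ℝ)+(s:ℝ)+4) * ((2*n+s+3).factorial : ℝ) := by
      rw [show 2*n+s+4 = (2*n+s+3)+1 from by omega, Nat.factorial_succ]
      push_cast; ring
    have f3 : (((s+2).factorial : ℝ)) = ((s:ℝ)+2) * ((s:ℝ)+1) * (s.factorial : ℝ) := by
      rw [Nat.factorial_succ, Nat.factorial_succ]; push_cast; ring
    have f4 : (((s+1).factorial : ℝ)) = ((s:ℝ)+1) * (s.factorial : ℝ) := by
      rw [Nat.factorial_succ]; push_cast; ring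
    have f5 : (((n+2+s+1).factorial : ℝ)) = ((n:ℝ)+(s:ℝ)+3) * ((n+2+s).factorial : ℝ) := by
      rw [Nat.factorial_succ]; push_cast; ring
    rw [f1, f2, f3, f4, f5]
    have h23 := fact_ne_s9 (2*n+s+3)
    have hsf := fact_ne_s9 s
    have hjf := fact_ne_s9 (n+2+s)
    field_simp
    ring

lemma intInt (p : ℝ[X]) (j : ℕ) :
    IntervalIntegrable (fun x => x^j * p.eval x) MeasureTheory.volume 0 1 :=
  ((continuous_pow j).mul p.continuous).intervalIntegrable _ _

lemma moment : ∀ n j, (∫ x in (0:ℝ)..1, x^j * (legP n).eval x) = Mo n j := by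
  intro n
  induction n using Nat.strong_induction_on with
  | _ n ih =>
    match n with
    | 0 =>
      intro j
      have : (fun x : ℝ => x^j * (legP 0).eval x) = fun x => x^j := by
        funext x; simp [legP]
      rw [this, integral_pow]
      rw [Mo, if_neg (by omega)]
      have f1 : (((j+0+1).factorial : ℝ)) = ((j:ℝ)+1) * (j.factorial : ℝ) := by
        rw [show j+0+1 = j+1 from by omega, Nat.factorial_succ]; push_cast; ring
      rw [show j - 0 = j from by omega, f1]
      have := fact_ne_s9 j
      have hj1 : ((j:ℝ)+1) ≠ 0 := by positivity
      field_simp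
      ring
    | 1 =>
      intro j
      have key : (fun x : ℝ => x^j * (legP 1).eval x) = fun x => 2 * x^(j+1) - x^j := by
        funext x; show x^j * (2*X-1 : ℝ[X]).eval x = _; simp; ring
      rw [key, integral_sub ((intervalIntegral.intervalIntegrable_pow (j+1)).const_mul 2)
        (intervalIntegral.intervalIntegrable_pow j), integral_const_mul, integral_pow,
        integral_pow]
      match j with
      | 0 => rw [Mo, if_pos (by omega)]; norm_num
      | t+1 =>
        rw [Mo, if_neg (by omega)]
        rw [show t+1-1 = t from by omega, show t+1+1+1 = t+3 from by omega]
        have f1 : (((t+3).factorial : ℝ))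
            = ((t:ℝ)+3) * ((t:ℝ)+2) * ((t:ℝ)+1) * (t.factorial : ℝ) := by
          rw [show t+3 = (t+2)+1 from by omega, Nat.factorial_succ,
            show t+2 = (t+1)+1 from by omega, Nat.factorial_succ, Nat.factorial_succ]
          push_cast; ring
        have f2 : (((t+1).factorial : ℝ)) = ((t:ℝ)+1) * (t.factorial : ℝ) := by
          rw [Nat.factorial_succ]; push_cast; ring
        rw [f1, f2]
        have := fact_ne_s9 t
        have h1 : ((t:ℝ)+1) ≠ 0 := by positivity
        have h2 : ((t:ℝ)+2) ≠ 0 := by positivity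
        have h3 : ((t:ℝ)+3) ≠ 0 := by positivity
        push_cast
        field_simp
        ring
    | (m+2) =>
      intro j
      have ih1 := ih (m+1) (by omega)
      have ih0 := ih m (by omega)
      set c1 : ℝ := (2 * ((m:ℝ) + 1) + 1) / ((m:ℝ)+2) with hc1
      set c2 : ℝ := ((m:ℝ)+1) / ((m:ℝ)+2) with hc2
      have key : (fun x : ℝ => x^j * (legP (m+2)).eval x)
          = fun x => c1 * (2 * (x^(j+1) * (legP (m+1)).eval x) - x^j * (legP (m+1)).eval x)
            - c2 * (x^j * (legP m).eval x) := by
        funext x; rw [legP_two_add]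
        simp only [eval_sub, eval_mul, eval_C, eval_add, eval_ofNat, eval_one, eval_X,
          hc1, hc2]
        push_cast
        ring
      have I1 := intInt (legP (m+1)) (j+1)
      have I2 := intInt (legP (m+1)) j
      have I3 := intInt (legP m) j
      rw [key, integral_sub (((I1.const_mul 2).sub I2).const_mul c1) (I3.const_mul c2),
        integral_const_mul, integral_const_mul, integral_sub (I1.const_mul 2) I2,
        integral_const_mul, ih1 (j+1), ih1 j, ih0 j, Mo_rec]

/-- Orthogonality of the shifted Legendre polynomial `legP m` to all polynomials of
degree `< m` on `[0,1]`. -/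
lemma orth (m : ℕ) (q : ℝ[X]) (hq : q.natDegree < m) :
    (∫ x in (0:ℝ)..1, (legP m).eval x * q.eval x) = 0 := by
  have key : (fun x : ℝ => (legP m).eval x * q.eval x)
      = fun x => ∑ i ∈ Finset.range (q.natDegree + 1),
          q.coeff i * (x^i * (legP m).eval x) := by
    funext x
    rw [eval_eq_sum_range (R := ℝ) (p := q), Finset.mul_sum]
    apply Finset.sum_congr rfl
    intro i _
    ring
  rw [key, intervalIntegral.integral_finset_sum (fun i _ => (intInt (legP m) i).const_mul _)]
  apply Finset.sum_eq_zero
  intro i hi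
  rw [integral_const_mul, moment, Mo, if_pos (by simp only [Finset.mem_range] at hi; omega),
    mul_zero]

/-! ### Polynomial antiderivatives and the structure of `xi` -/

lemma antideriv (p : ℝ[X]) : ∃ q : ℝ[X],
    q.natDegree ≤ p.natDegree + 1 ∧ q.derivative = p ∧ q.eval 0 = 0 := by
  refine ⟨∑ i ∈ Finset.range (p.natDegree + 1), C (p.coeff i / (i+1)) * X^(i+1), ?_, ?_, ?_⟩
  · apply natDegree_sum_le_of_forall_le
    intro i hi
    refine le_trans (natDegree_C_mul_le _ _) ?_
    rw [natDegree_X_pow]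
    simp only [Finset.mem_range] at hi
    omega
  · rw [derivative_sum]
    conv_rhs => rw [p.as_sum_range]
    apply Finset.sum_congr rfl
    intro i _
    rw [derivative_C_mul, derivative_X_pow, ← mul_assoc, ← C_mul]
    have h1 : ((i:ℝ)+1) ≠ 0 := by positivity
    rw [show i + 1 - 1 = i from by omega]
    rw [C_mul_X_pow_eq_monomial]
    congr 1
    push_cast
    field_simp
  · rw [eval_finset_sum]
    apply Finset.sum_eq_zero
    intro i _
    simp [zero_pow]

lemma poly_ftc (q : ℝ[X]) (a b : ℝ) :
    (∫ x in a..b, (q.derivative).eval x) = q.eval b - q.eval a :=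
  integral_eq_sub_of_hasDerivAt (fun x _ => q.hasDerivAt x)
    ((q.derivative.continuous).intervalIntegrable _ _)

lemma xi_cons_eval (m : ℕ) (d : List ℕ) (g : ℝ[X]) (hg : ∀ x, xi d x = g.eval x) :
    ∃ Q : ℝ[X], Q.natDegree ≤ (legP (m-1) * g).natDegree + 1 ∧
      Q.derivative = legP (m-1) * g ∧ Q.eval 0 = 0 ∧ ∀ x, xi (m :: d) x = Q.eval x := by
  obtain ⟨Q, h1, h2, h3⟩ := antideriv (legP (m-1) * g)
  refine ⟨Q, h1, h2, h3, fun x => ?_⟩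
  show (∫ y in (0:ℝ)..x, shiftedLegendre (m-1) y * xi d y) = Q.eval x
  have hcongr : ∀ y, shiftedLegendre (m-1) y * xi d y = (Q.derivative).eval y := by
    intro y
    rw [legP_eval, hg, h2, eval_mul]
  rw [intervalIntegral.integral_congr (fun y _ => hcongr y), poly_ftc, h3, sub_zero]

lemma xi_poly_s9 (l : List ℕ) (hl : ∀ n ∈ l, 0 < n) :
    ∃ g : ℝ[X], g.natDegree ≤ l.sum ∧ ∀ x, xi l x = g.eval x := by
  induction l with
  | nil => exact ⟨1, by simp, fun x => by simp [xi]⟩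
  | cons n l ihl =>
    obtain ⟨g, hdeg, hg⟩ := ihl (fun m hm => hl m (List.mem_cons_of_mem _ hm))
    obtain ⟨Q, h1, _, _, h4⟩ := xi_cons_eval n l g hg
    refine ⟨Q, ?_, h4⟩
    have hmul : (legP (n-1) * g).natDegree ≤ (n-1) + l.sum :=
      le_trans natDegree_mul_le (Nat.add_le_add (legP_natDegree _) hdeg)
    have hn : 0 < n := hl n (List.mem_cons_self)
    simp only [List.sum_cons]
    omega

/-- Integration by parts step. -/
lemma byparts (w : ℝ[X]) (m : ℕ) (d : List ℕ) (g : ℝ[X]) (hg : ∀ x, xi d x = g.eval x) :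
    ∃ B : ℝ[X], B.natDegree ≤ w.natDegree + 1 ∧
      (∫ x in (0:ℝ)..1, w.eval x * xi (m :: d) x)
        = ∫ x in (0:ℝ)..1, (legP (m-1)).eval x * ((B * g).eval x) := by
  obtain ⟨qw, hw1, hw2, _⟩ := antideriv w
  set A : ℝ[X] := qw - C (qw.eval 1) with hA
  have hAderiv : A.derivative = w := by rw [hA, derivative_sub, derivative_C, sub_zero, hw2]
  have hAone : A.eval 1 = 0 := by simp [hA]
  have hAdeg : A.natDegree ≤ w.natDegree + 1 := by
    rw [hA]
    refine le_trans (natDegree_sub_le _ _) ?_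
    simp only [natDegree_C, max_le_iff]
    exact ⟨hw1, by omega⟩
  obtain ⟨Q, hQ1, hQ2, hQ3, hQ4⟩ := xi_cons_eval m d g hg
  have hAQ : (A * Q).derivative = w * Q + legP (m-1) * (A * g) := by
    rw [derivative_mul, hAderiv, hQ2]; ring
  have main : (∫ x in (0:ℝ)..1, ((A*Q).derivative).eval x) = 0 := by
    rw [poly_ftc]
    simp [hAone, hQ3]
  rw [hAQ] at main
  have hsplit : (∫ x in (0:ℝ)..1, (w * Q + legP (m-1) * (A * g)).eval x)
      = (∫ x in (0:ℝ)..1, (w * Q).eval x) + ∫ x in (0:ℝ)..1, (legP (m-1) * (A * g)).eval x := by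
    have e : (fun x : ℝ => (w * Q + legP (m-1) * (A * g)).eval x)
        = fun x => (w * Q).eval x + (legP (m-1) * (A * g)).eval x := by
      funext x; simp
    rw [e]
    exact integral_add ((w*Q).continuous.intervalIntegrable _ _)
      ((legP (m-1) * (A*g)).continuous.intervalIntegrable _ _)
  rw [hsplit] at main
  refine ⟨-A, by simpa using hAdeg, ?_⟩
  have e1 : (∫ x in (0:ℝ)..1, w.eval x * xi (m :: d) x)
      = ∫ x in (0:ℝ)..1, (w * Q).eval x := by
    apply intervalIntegral.integral_congr
    intro x _
    dsimp only
    rw [hQ4 x, eval_mul]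
  have e2 : (∫ x in (0:ℝ)..1, (legP (m-1)).eval x * ((-A * g).eval x))
      = -∫ x in (0:ℝ)..1, (legP (m-1) * (A * g)).eval x := by
    rw [← integral_neg]
    apply intervalIntegral.integral_congr
    intro x _
    dsimp only
    simp only [eval_mul, eval_neg]
    ring
  rw [e1, e2]
  linarith [main]

lemma step (w : ℝ[X]) (m : ℕ) (hm : 0 < m) (d : List ℕ) (hd : ∀ n ∈ d, 0 < n) :
    ∃ w' : ℝ[X], w'.natDegree ≤ w.natDegree + m ∧
      (∫ x in (0:ℝ)..1, w.eval x * xi (m :: d) x)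
        = ∫ x in (0:ℝ)..1, w'.eval x * xi d x := by
  obtain ⟨g, hgdeg, hg⟩ := xi_poly_s9 d hd
  obtain ⟨B, hB1, hB2⟩ := byparts w m d g hg
  refine ⟨legP (m-1) * B, ?_, ?_⟩
  · have := le_trans natDegree_mul_le (Nat.add_le_add (legP_natDegree (m-1)) hB1)
    omega
  · rw [hB2]
    apply intervalIntegral.integral_congr
    intro x _
    dsimp only
    rw [hg x]
    simp only [eval_mul]
    ring

lemma key_s9 : ∀ (a d : List ℕ) (w : ℝ[X]), (∀ n ∈ a, 0 < n) → (∀ n ∈ d, 0 < n) →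
    ∃ W : ℝ[X], W.natDegree ≤ w.natDegree + a.sum ∧
      (∫ x in (0:ℝ)..1, w.eval x * xi (a ++ d) x)
        = ∫ x in (0:ℝ)..1, W.eval x * xi d x := by
  intro a
  induction a with
  | nil => exact fun d w _ _ => ⟨w, by simp, by simp⟩
  | cons m a iha =>
    intro d w ha hd
    have hm : 0 < m := ha m (List.mem_cons_self)
    have ha' : ∀ n ∈ a, 0 < n := fun n hn => ha n (List.mem_cons_of_mem _ hn)
    have had : ∀ n ∈ a ++ d, 0 < n := by
      intro n hn
      rcases List.mem_append.mp hn with h | h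
      · exact ha' n h
      · exact hd n h
    obtain ⟨w₁, hw₁, he₁⟩ := step w m hm (a ++ d) had
    obtain ⟨W, hW, he₂⟩ := iha d w₁ ha' hd
    refine ⟨W, ?_, ?_⟩
    · simp only [List.sum_cons]
      omega
    · rw [show (m :: a) ++ d = m :: (a ++ d) from rfl, he₁, he₂]

/-- If `N` is an even positive integer, `n₁ + ⋯ + n_m ≤ N` (the `nᵢ` positive, `m ≥ 1`),
and `2 n_k > N` for some index `k`, then `ξ(n₁,…,n_m) = 0`. Consequently, in the
`N`-th order truncation of the Magnus expansion only the Legendre coefficients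
`A_1, …, A_{N/2}` can occur. -/
theorem xi_eq_zero_of_index_gt_half (N : ℕ) (hNeven : Even N) (hNpos : 0 < N)
    (l : List ℕ) (hl : l ≠ []) (hpos : ∀ n ∈ l, 0 < n) (hsum : l.sum ≤ N)
    (hk : ∃ k : Fin l.length, N < 2 * l.get k) :
    xi l 1 = 0 := by
  obtain ⟨k, hk2⟩ := hk
  obtain ⟨n, hn⟩ : ∃ n, l.get k = n := ⟨_, rfl⟩
  rw [hn] at hk2
  obtain ⟨t, b, hsplit⟩ : ∃ t b, l = t ++ n :: b := by
    refine ⟨l.take k, l.drop (k+1), ?_⟩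
    conv_lhs => rw [← List.take_append_drop (k:ℕ) l]
    congr 1
    rw [List.drop_eq_getElem_cons k.isLt, ← hn]
    simp
  have hNn : N + 2 ≤ 2 * n := by
    obtain ⟨r, rfl⟩ := hNeven
    omega
  have hsums : t.sum + n + b.sum ≤ N := by
    rw [hsplit] at hsum
    simp only [List.sum_append, List.sum_cons] at hsum
    omega
  have hn2 : 2 ≤ n := by omega
  have hposn : ∀ p ∈ n :: b, 0 < p := by
    intro p hp
    apply hpos
    rw [hsplit]
    exact List.mem_append.mpr (Or.inr hp)
  have hposb : ∀ p ∈ b, 0 < p := fun p hp => hposn p (List.mem_cons_of_mem _ hp)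
  obtain ⟨g, hgdeg, hg⟩ := xi_poly_s9 b hposb
  cases t with
  | nil =>
    rw [hsplit]
    show (∫ y in (0:ℝ)..1, shiftedLegendre (n-1) y * xi b y) = 0
    have hcongr : ∀ y : ℝ, shiftedLegendre (n-1) y * xi b y
        = (legP (n-1)).eval y * g.eval y := by
      intro y
      rw [legP_eval, hg]
    rw [intervalIntegral.integral_congr (fun y _ => hcongr y)]
    apply orth
    simp only [List.nil_append, List.sum_nil] at hsums
    omega
  | cons m t' =>
    have hpost : ∀ p ∈ m :: t', 0 < p := by
      intro p hp
      apply hpos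
      rw [hsplit]
      exact List.mem_append.mpr (Or.inl hp)
    have hm : 0 < m := hpost m (List.mem_cons_self)
    have hpost' : ∀ p ∈ t', 0 < p := fun p hp => hpost p (List.mem_cons_of_mem _ hp)
    rw [hsplit, show (m :: t') ++ n :: b = m :: (t' ++ n :: b) from rfl]
    show (∫ y in (0:ℝ)..1, shiftedLegendre (m-1) y * xi (t' ++ n :: b) y) = 0
    have hcongr : ∀ y : ℝ, shiftedLegendre (m-1) y * xi (t' ++ n :: b) y
        = (legP (m-1)).eval y * xi (t' ++ n :: b) y := by
      intro y
      rw [legP_eval]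
    rw [intervalIntegral.integral_congr (fun y _ => hcongr y)]
    obtain ⟨W, hWdeg, hWeq⟩ := key_s9 t' (n :: b) (legP (m-1)) hpost' hposn
    rw [hWeq]
    obtain ⟨B, hBdeg, hBeq⟩ := byparts W n b g hg
    rw [hBeq]
    apply orth
    have h1 : (B * g).natDegree ≤ B.natDegree + g.natDegree := natDegree_mul_le
    have h2 : (legP (m-1)).natDegree ≤ m - 1 := legP_natDegree _
    have h3 : (m :: t').sum + n + b.sum ≤ N := hsums
    have h4 : (m :: t').sum = m + t'.sum := by simp
    omega
end

section
/- Let Δ, V, ω ∈ ℝ and set Ω = √((Δ−ω)² + V²), assuming Ω > 0. Define H(t) as the 2×2 complex matrix with rows (Δ, V·e^{−2iωt}) and (V·e^{2iωt}, −Δ), and define U(t) as the 2×2 complex matrix with entries U_11(t) = e^{−iωt}(cos Ωt − i((Δ−ω)/Ω) sin Ωt), U_12(t) = −i(V/Ω)·e^{−iωt}·sin Ωt, U_21(t) = −i(V/Ω)·e^{iωt}·sin Ωt, U_22(t) = e^{iωt}(cos Ωt + i((Δ−ω)/Ω) sin Ωt). Then U(0) = I and, for every t ∈ ℝ, U is differentiable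 at t with i·U′(t) = H(t)·U(t); that is, U(t) is the exact propagator of the periodically driven two-level system. -/
set_option maxHeartbeats 1000000

attribute [local instance] Matrix.normedAddCommGroup Matrix.normedSpace

/-- The matrix `U t` with entries built from `Ω = √((Δ−ω)² + V²)` is the exact propagator of
the periodically driven two-level system with Hamiltonian
`H t = !![Δ, V e^{−2iωt}; V e^{2iωt}, −Δ]`: it satisfies `U 0 = I` and
`i • U' t = H t * U t` for all `t`. -/
theorem driven_two_level_propagator (Δ V ω Ω : ℝ)
    (hΩdef : Ω = Real.sqrt ((Δ - ω) ^ 2 + V ^ 2)) (hΩpos : 0 < Ω)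
    (H U : ℝ → Matrix (Fin 2) (Fin 2) ℂ)
    (hH : H = fun t : ℝ =>
      !![(Δ : ℂ), (V : ℂ) * Complex.exp (-2 * Complex.I * (ω : ℂ) * (t : ℂ));
         (V : ℂ) * Complex.exp (2 * Complex.I * (ω : ℂ) * (t : ℂ)), -(Δ : ℂ)])
    (hU : U = fun t : ℝ =>
      !![Complex.exp (-Complex.I * (ω : ℂ) * (t : ℂ)) *
            ((Real.cos (Ω * t) : ℂ) -
              Complex.I * (((Δ - ω) / Ω : ℝ) : ℂ) * (Real.sin (Ω * t) : ℂ)),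
         -Complex.I * ((V / Ω : ℝ) : ℂ) * Complex.exp (-Complex.I * (ω : ℂ) * (t : ℂ)) *
            (Real.sin (Ω * t) : ℂ);
         -Complex.I * ((V / Ω : ℝ) : ℂ) * Complex.exp (Complex.I * (ω : ℂ) * (t : ℂ)) *
            (Real.sin (Ω * t) : ℂ),
         Complex.exp (Complex.I * (ω : ℂ) * (t : ℂ)) *
            ((Real.cos (Ω * t) : ℂ) +
              Complex.I * (((Δ - ω) / Ω : ℝ) : ℂ) * (Real.sin (Ω * t) : ℂ))]) :
    U 0 = 1 ∧ ∀ t : ℝ, ∃ U' : Matrix (Fin 2) (Fin 2) ℂ,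
      HasDerivAt U U' t ∧ Complex.I • U' = H t * U t := by
  have hΩne : (Ω : ℂ) ≠ 0 := by exact_mod_cast hΩpos.ne'
  have hΩ2 : ((Ω : ℂ)) ^ 2 = ((Δ : ℂ) - ω) ^ 2 + (V : ℂ) ^ 2 := by
    have : Ω ^ 2 = (Δ - ω) ^ 2 + V ^ 2 := by
      rw [hΩdef, Real.sq_sqrt (by positivity)]
    exact_mod_cast this
  subst hH hU
  constructor
  · ext i j
    fin_cases i <;> fin_cases j <;> simp [Matrix.one_apply]
  · intro t
    have hc := (((hasDerivAt_id' (x := t)).const_mul Ω).cos).ofReal_comp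
    have hs := (((hasDerivAt_id' (x := t)).const_mul Ω).sin).ofReal_comp
    have hem := (((hasDerivAt_id' (x := (t:ℂ))).const_mul (-Complex.I * (ω:ℂ))).cexp).comp_ofReal
    have hep := (((hasDerivAt_id' (x := (t:ℂ))).const_mul (Complex.I * (ω:ℂ))).cexp).comp_ofReal
    refine ⟨!![Complex.exp (-Complex.I * (ω:ℂ) * t) * (-Complex.I * (ω:ℂ)) *
            ((Real.cos (Ω * t) : ℂ) - Complex.I * (((Δ - ω) / Ω : ℝ) : ℂ) * (Real.sin (Ω * t) : ℂ)) +
          Complex.exp (-Complex.I * (ω:ℂ) * t) *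
            (-(Ω:ℂ) * (Real.sin (Ω * t) : ℂ) -
              Complex.I * (((Δ - ω) / Ω : ℝ) : ℂ) * (Ω:ℂ) * (Real.cos (Ω * t) : ℂ)),
        -Complex.I * ((V / Ω : ℝ) : ℂ) *
            (Complex.exp (-Complex.I * (ω:ℂ) * t) * (-Complex.I * (ω:ℂ)) * (Real.sin (Ω * t) : ℂ) +
             Complex.exp (-Complex.I * (ω:ℂ) * t) * (Ω:ℂ) * (Real.cos (Ω * t) : ℂ));
        -Complex.I * ((V / Ω : ℝ) : ℂ) *
            (Complex.exp (Complex.I * (ω:ℂ) * t) * (Complex.I * (ω:ℂ)) * (Real.sin (Ω * t) : ℂ) +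
             Complex.exp (Complex.I * (ω:ℂ) * t) * (Ω:ℂ) * (Real.cos (Ω * t) : ℂ)),
        Complex.exp (Complex.I * (ω:ℂ) * t) * (Complex.I * (ω:ℂ)) *
            ((Real.cos (Ω * t) : ℂ) + Complex.I * (((Δ - ω) / Ω : ℝ) : ℂ) * (Real.sin (Ω * t) : ℂ)) +
          Complex.exp (Complex.I * (ω:ℂ) * t) *
            (-(Ω:ℂ) * (Real.sin (Ω * t) : ℂ) +
              Complex.I * (((Δ - ω) / Ω : ℝ) : ℂ) * (Ω:ℂ) * (Real.cos (Ω * t) : ℂ))], ?_, ?_⟩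
    · have h00 : HasDerivAt (fun r : ℝ => Complex.exp (-Complex.I * (ω:ℂ) * r) *
            ((Real.cos (Ω * r) : ℂ) - Complex.I * (((Δ - ω) / Ω : ℝ) : ℂ) * (Real.sin (Ω * r) : ℂ)))
          (Complex.exp (-Complex.I * (ω:ℂ) * t) * (-Complex.I * (ω:ℂ)) *
            ((Real.cos (Ω * t) : ℂ) - Complex.I * (((Δ - ω) / Ω : ℝ) : ℂ) * (Real.sin (Ω * t) : ℂ)) +
          Complex.exp (-Complex.I * (ω:ℂ) * t) *
            (-(Ω:ℂ) * (Real.sin (Ω * t) : ℂ) -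
              Complex.I * (((Δ - ω) / Ω : ℝ) : ℂ) * (Ω:ℂ) * (Real.cos (Ω * t) : ℂ))) t :=
        by refine (hem.mul (hc.sub (hs.const_mul (Complex.I * (((Δ - ω) / Ω : ℝ) : ℂ))))).congr_deriv ?_
           push_cast; simp only [Pi.sub_apply, Pi.add_apply]; ring
      have h01 : HasDerivAt (fun r : ℝ => -Complex.I * ((V / Ω : ℝ) : ℂ) *
            Complex.exp (-Complex.I * (ω:ℂ) * r) * (Real.sin (Ω * r) : ℂ))
          (-Complex.I * ((V / Ω : ℝ) : ℂ) *
            (Complex.exp (-Complex.I * (ω:ℂ) * t) * (-Complex.I * (ω:ℂ)) * (Real.sin (Ω * t) : ℂ) +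
             Complex.exp (-Complex.I * (ω:ℂ) * t) * (Ω:ℂ) * (Real.cos (Ω * t) : ℂ))) t :=
        ((hem.const_mul (-Complex.I * ((V / Ω : ℝ) : ℂ))).mul hs).congr_deriv
          (by push_cast; ring)
      have h10 : HasDerivAt (fun r : ℝ => -Complex.I * ((V / Ω : ℝ) : ℂ) *
            Complex.exp (Complex.I * (ω:ℂ) * r) * (Real.sin (Ω * r) : ℂ))
          (-Complex.I * ((V / Ω : ℝ) : ℂ) *
            (Complex.exp (Complex.I * (ω:ℂ) * t) * (Complex.I * (ω:ℂ)) * (Real.sin (Ω * t) : ℂ) +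
             Complex.exp (Complex.I * (ω:ℂ) * t) * (Ω:ℂ) * (Real.cos (Ω * t) : ℂ))) t :=
        ((hep.const_mul (-Complex.I * ((V / Ω : ℝ) : ℂ))).mul hs).congr_deriv
          (by push_cast; ring)
      have h11 : HasDerivAt (fun r : ℝ => Complex.exp (Complex.I * (ω:ℂ) * r) *
            ((Real.cos (Ω * r) : ℂ) + Complex.I * (((Δ - ω) / Ω : ℝ) : ℂ) * (Real.sin (Ω * r) : ℂ)))
          (Complex.exp (Complex.I * (ω:ℂ) * t) * (Complex.I * (ω:ℂ)) *
            ((Real.cos (Ω * t) : ℂ) + Complex.I * (((Δ - ω) / Ω : ℝ) : ℂ) * (Real.sin (Ω * t) : ℂ)) +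
          Complex.exp (Complex.I * (ω:ℂ) * t) *
            (-(Ω:ℂ) * (Real.sin (Ω * t) : ℂ) +
              Complex.I * (((Δ - ω) / Ω : ℝ) : ℂ) * (Ω:ℂ) * (Real.cos (Ω * t) : ℂ))) t :=
        by refine (hep.mul (hc.add (hs.const_mul (Complex.I * (((Δ - ω) / Ω : ℝ) : ℂ))))).congr_deriv ?_
           push_cast; simp only [Pi.sub_apply, Pi.add_apply]; ring
      refine hasDerivAt_pi.2 fun i => hasDerivAt_pi.2 fun j => ?_
      fin_cases i <;> fin_cases j
      · exact h00
      · exact h01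
      · exact h10
      · exact h11
    · have h1 : Complex.exp (-Complex.I * (ω:ℂ) * t) = (Complex.exp (Complex.I * (ω:ℂ) * t))⁻¹ := by
        rw [← Complex.exp_neg]; congr 1; ring
      have h2 : Complex.exp (-2 * Complex.I * (ω:ℂ) * t) =
          ((Complex.exp (Complex.I * (ω:ℂ) * t))⁻¹) ^ 2 := by
        rw [← Complex.exp_neg, ← Complex.exp_nat_mul]; congr 1; push_cast; ring
      have h3 : Complex.exp (2 * Complex.I * (ω:ℂ) * t) =
          (Complex.exp (Complex.I * (ω:ℂ) * t)) ^ 2 := by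
        rw [← Complex.exp_nat_mul]; congr 1; push_cast; ring
      have hx : Complex.exp (Complex.I * (ω:ℂ) * t) ≠ 0 := Complex.exp_ne_zero _
      have g1 : Complex.exp (-(Complex.I * (ω:ℂ) * t)) = (Complex.exp (Complex.I * (ω:ℂ) * t))⁻¹ :=
        Complex.exp_neg _
      have g2 : Complex.exp (-(Complex.I * (ω:ℂ) * t * 2)) =
          ((Complex.exp (Complex.I * (ω:ℂ) * t))⁻¹) ^ 2 := by
        rw [← Complex.exp_neg, ← Complex.exp_nat_mul]; congr 1; push_cast; ring
      have g3 : Complex.exp (Complex.I * (ω:ℂ) * t * 2) =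
          (Complex.exp (Complex.I * (ω:ℂ) * t)) ^ 2 := by
        rw [← Complex.exp_nat_mul]; congr 1; push_cast; ring
      have hI : Complex.I ^ 2 = -1 := Complex.I_sq
      have he2 : Complex.exp (-(Complex.I * (ω:ℂ) * t * 2)) *
          Complex.exp (Complex.I * (ω:ℂ) * t) ^ 2 = 1 := by
        rw [pow_two, ← Complex.exp_add, ← Complex.exp_add,
          show -(Complex.I * (ω:ℂ) * t * 2) + (Complex.I * (ω:ℂ) * t + Complex.I * (ω:ℂ) * t)
            = 0 by ring, Complex.exp_zero]
      have hZY : Complex.exp (-(2 * Complex.I * (ω:ℂ) * t)) =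
          Complex.exp (-(Complex.I * (ω:ℂ) * t * 2)) := by congr 1; ring
      ext i j
      fin_cases i <;> fin_cases j <;>
        [skip; skip; skip; skip] <;>
        (simp [Matrix.mul_apply, Fin.sum_univ_two];
         simp only [g1, g2, g3, h1, h2, h3];
         push_cast; field_simp)
      · linear_combination
          (-(Ω:ℂ) * Complex.cos ((t:ℂ)*(Ω:ℂ)) * Δ + Complex.I * ω * (Δ - ω) * Complex.sin ((t:ℂ)*(Ω:ℂ))) * hI
          + (-(Complex.I * Complex.sin ((t:ℂ)*(Ω:ℂ)))) * hΩ2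
          + (Complex.I * Complex.sin ((t:ℂ)*(Ω:ℂ)) * (V:ℂ)^2) * he2
      · linear_combination
          (Complex.I * V * ω * Complex.sin ((Ω:ℂ)*(t:ℂ)) - V * Ω * Complex.cos ((Ω:ℂ)*(t:ℂ))) * hI
          + (-(V:ℂ) * (Ω * Complex.cos ((Ω:ℂ)*(t:ℂ)) + Complex.I * Complex.sin ((Ω:ℂ)*(t:ℂ)) * (Δ - ω))) * he2
      · linear_combination
          (-(Complex.I * V * ω * Complex.sin ((Ω:ℂ)*(t:ℂ)) + V * Ω * Complex.cos ((Ω:ℂ)*(t:ℂ)))) * hI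
      · linear_combination
          ((Ω:ℂ) * Complex.cos ((t:ℂ)*(Ω:ℂ)) * Δ + Complex.I * ω * (Δ - ω) * Complex.sin ((t:ℂ)*(Ω:ℂ))) * hI
          + (-(Complex.I * Complex.sin ((t:ℂ)*(Ω:ℂ)))) * hΩ2
end

section
/- Let t > 0, let k ≥ 1 and n_1, …, n_k be positive integers with n = n_1 + ⋯ + n_k, and let f : ℝⁿ → ℂ be a continuous function. Let I_n[t|n_1,…,n_k] ⊂ ℝⁿ be the set of tuples (t_1,…,t_n) such that within each consecutive block of coordinates of sizes n_1, …, n_k the coordinates are strictly decreasing and lie in (0,t) (i.e. I_n[t|n_1,…,n_k] is the product of the open simplices Δ_{n_1}[t] × ⋯ × Δ_{n_k}[t]), and let Δ_n[t] = {(t_1,…,t_n) : t > t_1 > t_2 > ⋯ > t_n > 0}. Then ∫_{I_n[t|n_1,…,n_k]} f(t_1,…,t_n) d(t_1,…,t_n) = Σ_{π ∈ P_n[n_1,…,n_k]} ∫_{Δ_n[t]} f(t_{π(1)},…,t_{π(n)}) d(t_1,…,t_n), where the sum runs over all permutations π of {1,…,n} that are strictly increasing on each of the consecutive blocks of sizes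 n_1, …, n_k. -/
open MeasureTheory

private lemma perm_eq_of_lt_imp_lt {n : ℕ} (π π' : Equiv.Perm (Fin n))
    (h : ∀ a b : Fin n, π a < π b → π' a < π' b) : π = π' := by
  have hm : StrictMono (fun i => π' (π.symm i)) := by
    intro i j hij
    exact h _ _ (by simpa using hij)
  have hs : Function.Surjective (fun i => π' (π.symm i)) :=
    π'.surjective.comp π.symm.surjective
  have hu : (StrictMono.orderIsoOfSurjective _ hm hs) = OrderIso.refl (Fin n) :=
    Subsingleton.elim _ _
  ext a
  have h2 : π' (π.symm (π a)) = π a := by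
    have := congrArg (fun (e : Fin n ≃o Fin n) => e (π a)) hu
    simpa [StrictMono.coe_orderIsoOfSurjective] using this
  simpa using congrArg Fin.val h2.symm

/-- Decomposition of the integral over a product of time-ordered simplices into a sum of
time-ordered integrals: for continuous `f : ℝⁿ → ℂ`,
`∫_{I_n[t|n₁,…,n_k]} f = Σ_{π ∈ P_n[n₁,…,n_k]} ∫_{Δ_n[t]} f ∘ π`,
where `P_n[n₁,…,n_k]` is the set of permutations strictly increasing on each of the
consecutive blocks of sizes `n₁, …, n_k`. -/
theorem integral_block_simplices_eq_sum_perm (t : ℝ) (ht : 0 < t)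
    (k : ℕ) (hk : 1 ≤ k) (nn : Fin k → ℕ) (hpos : ∀ i, 0 < nn i)
    (n : ℕ) (hn : n = ∑ i, nn i)
    (f : (Fin n → ℝ) → ℂ) (hf : Continuous f) :
    (∫ x in {x : Fin n → ℝ | (∀ p, 0 < x p ∧ x p < t) ∧
        ∀ j : Fin k, ∀ p q : Fin n,
          (∑ i ∈ Finset.univ.filter (fun i => i < j), nn i) ≤ (p : ℕ) →
          (q : ℕ) < (∑ i ∈ Finset.univ.filter (fun i => i < j), nn i) + nn j →
          p < q → x q < x p}, f x) =
      ∑ π ∈ Finset.univ.filter (fun π : Equiv.Perm (Fin n) =>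
          ∀ j : Fin k, ∀ p q : Fin n,
            (∑ i ∈ Finset.univ.filter (fun i => i < j), nn i) ≤ (p : ℕ) →
            (q : ℕ) < (∑ i ∈ Finset.univ.filter (fun i => i < j), nn i) + nn j →
            p < q → π p < π q),
        ∫ x in {x : Fin n → ℝ | (∀ p, 0 < x p ∧ x p < t) ∧
            ∀ p q : Fin n, p < q → x q < x p}, f (fun i => x (π i)) := by
  classical
  set A : Set (Fin n → ℝ) := {x : Fin n → ℝ | (∀ p, 0 < x p ∧ x p < t) ∧
      ∀ j : Fin k, ∀ p q : Fin n,
        (∑ i ∈ Finset.univ.filter (fun i => i < j), nn i) ≤ (p : ℕ) →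
        (q : ℕ) < (∑ i ∈ Finset.univ.filter (fun i => i < j), nn i) + nn j →
        p < q → x q < x p} with hA
  set Δ : Set (Fin n → ℝ) := {x : Fin n → ℝ | (∀ p, 0 < x p ∧ x p < t) ∧
      ∀ p q : Fin n, p < q → x q < x p} with hΔ
  set P : Finset (Equiv.Perm (Fin n)) := Finset.univ.filter (fun π : Equiv.Perm (Fin n) =>
      ∀ j : Fin k, ∀ p q : Fin n,
        (∑ i ∈ Finset.univ.filter (fun i => i < j), nn i) ≤ (p : ℕ) →
        (q : ℕ) < (∑ i ∈ Finset.univ.filter (fun i => i < j), nn i) + nn j →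
        p < q → π p < π q) with hP
  set S : Equiv.Perm (Fin n) → Set (Fin n → ℝ) :=
    fun π => {y : Fin n → ℝ | (∀ p, 0 < y p ∧ y p < t) ∧
      ∀ a b : Fin n, π a < π b → y b < y a} with hS
  -- measurability of S π
  have hSmeas : ∀ π, MeasurableSet (S π) := by
    intro π
    have h1 : MeasurableSet {y : Fin n → ℝ | ∀ p, 0 < y p ∧ y p < t} := by
      rw [Set.setOf_forall]
      exact MeasurableSet.iInter fun p =>
        (measurableSet_lt measurable_const (measurable_pi_apply p)).inter
          (measurableSet_lt (measurable_pi_apply p) measurable_const)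
    have h2 : MeasurableSet {y : Fin n → ℝ | ∀ a b : Fin n, π a < π b → y b < y a} := by
      rw [Set.setOf_forall]
      refine MeasurableSet.iInter fun a => ?_
      rw [Set.setOf_forall]
      refine MeasurableSet.iInter fun b => ?_
      by_cases hc : π a < π b
      · simp only [hc, true_implies]
        exact measurableSet_lt (measurable_pi_apply b) (measurable_pi_apply a)
      · simp [hc]
    exact h1.inter h2
  -- integrability of f on S π
  have hK : IsCompact (Set.pi Set.univ fun _ : Fin n => Set.Icc (0:ℝ) t) :=
    isCompact_univ_pi fun _ => isCompact_Icc
  have hIntK : IntegrableOn f (Set.pi Set.univ fun _ : Fin n => Set.Icc (0:ℝ) t) :=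
    hf.continuousOn.integrableOn_compact hK
  have hSint : ∀ π, IntegrableOn f (S π) := by
    intro π
    refine hIntK.mono_set ?_
    intro y hy i _
    exact ⟨(hy.1 i).1.le, (hy.1 i).2.le⟩
  -- change of variables
  have hCoV : ∀ π : Equiv.Perm (Fin n),
      (∫ x in Δ, f (fun i => x (π i))) = ∫ y in S π, f y := by
    intro π
    have hmp : MeasurePreserving (MeasurableEquiv.piCongrLeft (fun _ : Fin n => ℝ) π.symm)
        volume volume := volume_measurePreserving_piCongrLeft _ _
    have hemb := (MeasurableEquiv.piCongrLeft (fun _ : Fin n => ℝ) π.symm).measurableEmbedding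
    have happ : ∀ x : Fin n → ℝ,
        (MeasurableEquiv.piCongrLeft (fun _ : Fin n => ℝ) π.symm) x = fun i => x (π i) := by
      intro x; funext b
      simp [MeasurableEquiv.piCongrLeft, Equiv.piCongrLeft]
    have hpre : (MeasurableEquiv.piCongrLeft (fun _ : Fin n => ℝ) π.symm) ⁻¹' (S π) = Δ := by
      ext x
      simp only [Set.mem_preimage, happ x, hS, hΔ, Set.mem_setOf_eq]
      constructor
      · rintro ⟨h1, h2⟩
        refine ⟨fun p => by simpa using h1 (π.symm p), ?_⟩
        intro p q hpq
        have := h2 (π.symm p) (π.symm q) (by simpa using hpq)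
        simpa using this
      · rintro ⟨h1, h2⟩
        exact ⟨fun p => h1 (π p), fun a b hab => h2 (π a) (π b) hab⟩
    have hint := hmp.setIntegral_preimage_emb hemb f (S π)
    rw [hpre] at hint
    simp only [happ] at hint
    exact hint
  -- pairwise disjointness
  have hdisj : (↑P : Set (Equiv.Perm (Fin n))).Pairwise (Function.onFun Disjoint S) := by
    intro π _ π' _ hne
    rw [Function.onFun, Set.disjoint_left]
    intro y hy hy'
    apply hne
    apply perm_eq_of_lt_imp_lt
    intro a b hab
    have hba : y b < y a := hy.2 a b hab
    rcases lt_trichotomy (π' a) (π' b) with h | h | h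
    · exact h
    · exact absurd hab (by simp [π'.injective h])
    · exact absurd (hy'.2 b a h) (lt_asymm hba)
  -- hyperplanes are null
  have hplane : ∀ p q : Fin n, p ≠ q → volume {y : Fin n → ℝ | y p = y q} = 0 := by
    intro p q hpq
    have hset : {y : Fin n → ℝ | y p = y q} =
        ↑(LinearMap.ker ((LinearMap.proj p : (Fin n → ℝ) →ₗ[ℝ] ℝ) - LinearMap.proj q)) := by
      ext y
      simp [LinearMap.mem_ker, sub_eq_zero]
    rw [hset]
    apply Measure.addHaar_submodule
    intro htop
    have h0 : ((LinearMap.proj p : (Fin n → ℝ) →ₗ[ℝ] ℝ) - LinearMap.proj q) = 0 :=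
      LinearMap.ker_eq_top.mp htop
    have h1 := congrFun (congrArg (fun (L : (Fin n → ℝ) →ₗ[ℝ] ℝ) => (L : (Fin n → ℝ) → ℝ))
      h0) (Pi.single p 1)
    simp [Pi.single_eq_same, Pi.single_eq_of_ne (Ne.symm hpq)] at h1
  have hD : volume (⋃ (p : Fin n) (q : Fin n) (_ : p ≠ q), {y : Fin n → ℝ | y p = y q}) = 0 :=
    measure_iUnion_null fun p => measure_iUnion_null fun q =>
      measure_iUnion_null fun hpq => hplane p q hpq
  -- U ⊆ A
  have hUA : (⋃ π ∈ P, S π) ⊆ A := by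
    intro y hy
    simp only [Set.mem_iUnion] at hy
    obtain ⟨π, hπ, hyS⟩ := hy
    rw [hP, Finset.mem_filter] at hπ
    exact ⟨hyS.1, fun j p q h1 h2 h3 => hyS.2 p q (hπ.2 j p q h1 h2 h3)⟩
  -- A \ U is contained in the union of hyperplanes
  have hAU : A \ (⋃ π ∈ P, S π) ⊆
      ⋃ (p : Fin n) (q : Fin n) (_ : p ≠ q), {y : Fin n → ℝ | y p = y q} := by
    rintro y ⟨hyA, hyU⟩
    by_contra hyD
    apply hyU
    simp only [Set.mem_iUnion, Set.mem_setOf_eq] at hyD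
    push_neg at hyD
    have hdist : ∀ a b : Fin n, a ≠ b → y a ≠ y b := hyD
    set r : Fin n → ℕ := fun a => (Finset.univ.filter (fun c => y a < y c)).card with hr
    have hrlt : ∀ a, r a < n := by
      intro a
      have hne : (Finset.univ.filter (fun c => y a < y c)) ≠ Finset.univ := by
        intro h
        have : a ∈ Finset.univ.filter (fun c => y a < y c) := by
          rw [h]; exact Finset.mem_univ a
        exact lt_irrefl _ (Finset.mem_filter.mp this).2
      calc r a < Finset.univ.card :=
            Finset.card_lt_card ((Finset.subset_univ _).ssubset_of_ne hne)
        _ = n := by simp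
    have hkey : ∀ a b : Fin n, y b < y a → r a < r b := by
      intro a b hba
      have hsub : Finset.univ.filter (fun c => y a < y c) ⊆
          Finset.univ.filter (fun c => y b < y c) := by
        intro c hc
        rw [Finset.mem_filter] at hc ⊢
        exact ⟨hc.1, hba.trans hc.2⟩
      refine Finset.card_lt_card ((Finset.ssubset_iff_of_subset hsub).mpr ⟨a, ?_, ?_⟩)
      · simp [hba]
      · simp
    have hinj : Function.Injective (fun a => (⟨r a, hrlt a⟩ : Fin n)) := by
      intro a b hab
      by_contra hne
      simp only [Fin.mk.injEq] at hab
      rcases (hdist a b hne).lt_or_gt with h | h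
      · have := hkey b a h; omega
      · have := hkey a b h; omega
    set π₀ : Equiv.Perm (Fin n) :=
      Equiv.ofBijective _ (Finite.injective_iff_bijective.mp hinj) with hπ₀
    have hπ₀app : ∀ a, π₀ a = (⟨r a, hrlt a⟩ : Fin n) := fun a => rfl
    simp only [Set.mem_iUnion]
    refine ⟨π₀, ?_, ?_⟩
    · rw [hP, Finset.mem_filter]
      refine ⟨Finset.mem_univ _, fun j p q h1 h2 h3 => ?_⟩
      have hlt : y q < y p := hyA.2 j p q h1 h2 h3
      have : r p < r q := hkey p q hlt
      rw [hπ₀app p, hπ₀app q]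
      exact this
    · refine ⟨hyA.1, fun a b hab => ?_⟩
      rw [hπ₀app a, hπ₀app b] at hab
      have hab' : r a < r b := hab
      have hne' : a ≠ b := by
        intro h; subst h; exact lt_irrefl _ hab'
      rcases (hdist a b hne').lt_or_gt with h | h
      · exact absurd (hkey b a h) (by omega)
      · exact h
  -- a.e. equality and conclusion
  have haeq : A =ᵐ[volume] ⋃ π ∈ P, S π := by
    rw [MeasureTheory.ae_eq_set]
    constructor
    · exact measure_mono_null hAU hD
    · rw [Set.diff_eq_empty.mpr hUA]
      exact measure_empty
  rw [setIntegral_congr_set haeq,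
    integral_biUnion_finset P (fun π _ => hSmeas π) hdisj (fun π _ => hSint π)]
  exact Finset.sum_congr rfl (fun π _ => (hCoV π).symm)
end
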